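/- arXiv:2501.00991 — 3 statements merged into one kernel-verified Lean document; each statement's English description precedes it below -/
import Mathlib

section
/- Let G be a graph and let 𝓜 = (M_1, …, M_ℓ) be a partition of V(G) into modules. Let G/𝓜 be the subgraph of G induced by a set containing exactly one vertex from each M_i. Then tww(G) = max( tww(G/𝓜), max over i ∈ {1,…,ℓ} of tww(G[M_i]) ). -/
open Finset

/-- Two vertex sets are *homogeneous* in `G` if they are complete or anticomplete
to each other. A red edge of a trigraph in a contraction sequence joins two parts
that are not homogeneous. -/
def Homogeneous {V : Type*} (G : SimpleGraph V) (X Y : Finset V) : Prop :=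
  (∀ x ∈ X, ∀ y ∈ Y, G.Adj x y) ∨ (∀ x ∈ X, ∀ y ∈ Y, ¬ G.Adj x y)

/-- A contraction sequence of a graph on vertex type `V` (with `n = Fintype.card V`),
encoded by the partitions of `V` into the parts of the trigraphs `G_n, …, G_1`:
`parts i` is the partition whose blocks are the parts of the vertices of `G_i`.
`G_n` is the discrete partition, and `G_i` is obtained from `G_{i+1}` by merging two parts. -/
structure ContractionSeq (V : Type*) [Fintype V] [DecidableEq V] where
  parts : ℕ → Finpartition (Finset.univ : Finset V)
  parts_card : ∀ i, 1 ≤ i → i ≤ Fintype.card V → (parts i).parts.card = i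
  parts_top : ∀ X ∈ (parts (Fintype.card V)).parts, X.card = 1
  merge : ∀ i, 1 ≤ i → i < Fintype.card V →
    ∃ X ∈ (parts (i + 1)).parts, ∃ Y ∈ (parts (i + 1)).parts, X ≠ Y ∧
      (parts i).parts = insert (X ∪ Y) ((((parts (i + 1)).parts).erase X).erase Y)

/-- Every part of the partition `P` (i.e. every vertex of the corresponding trigraph)
is incident to at most `d` red edges. -/
def RedDegLE {V : Type*} [Fintype V] [DecidableEq V] (G : SimpleGraph V)
    (P : Finpartition (Finset.univ : Finset V)) (d : ℕ) : Prop :=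
  ∀ X ∈ P.parts, {Y | Y ∈ P.parts ∧ Y ≠ X ∧ ¬ Homogeneous G X Y}.ncard ≤ d

/-- `C` is a `d`-sequence of `G`: every trigraph in it has maximum red degree at most `d`. -/
def IsDSeq {V : Type*} [Fintype V] [DecidableEq V] (G : SimpleGraph V)
    (C : ContractionSeq V) (d : ℕ) : Prop :=
  ∀ i, 1 ≤ i → i ≤ Fintype.card V → RedDegLE G (C.parts i) d

/-- The twin-width of `G`: the least `d` such that `G` has a `d`-sequence. -/
noncomputable def tww {V : Type*} [Fintype V] [DecidableEq V] (G : SimpleGraph V) : ℕ :=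
  sInf {d | ∃ C : ContractionSeq V, IsDSeq G C d}

/-- `(σ, τ)` is a realiser of `G` as a permutation graph. -/
def IsRealiser {V : Type*} [Fintype V] (G : SimpleGraph V)
    (σ τ : V ≃ Fin (Fintype.card V)) : Prop :=
  ∀ u v : V, G.Adj u v ↔ ((σ u < σ v ∧ τ v < τ u) ∨ (σ v < σ u ∧ τ u < τ v))

/-- `G` is a permutation graph. -/
def IsPermutationGraph {V : Type*} [Fintype V] (G : SimpleGraph V) : Prop :=
  ∃ σ τ : V ≃ Fin (Fintype.card V), IsRealiser G σ τ

/-- `I` is an interval for the ordering `σ` (its image is a set of consecutive integers,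
equivalently it is convex). -/
def IsIntervalFor {V : Type*} {n : ℕ} (σ : V ≃ Fin n) (I : Set V) : Prop :=
  ∀ u v w : V, u ∈ I → w ∈ I → σ u ≤ σ v → σ v ≤ σ w → v ∈ I

/-- `M` is a module of `G`. -/
def IsModule {V : Type*} (G : SimpleGraph V) (M : Set V) : Prop :=
  ∀ v ∉ M, (∀ m ∈ M, G.Adj v m) ∨ (∀ m ∈ M, ¬ G.Adj v m)

/-- `G` is prime (w.r.t. modules): all its modules are trivial. -/
def IsPrimeGraph {V : Type*} (G : SimpleGraph V) : Prop :=
  ∀ M : Set V, IsModule G M → M.Subsingleton ∨ M = Set.univ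

/-- `M` is a strong module of `G`. -/
def IsStrongModule {V : Type*} (G : SimpleGraph V) (M : Set V) : Prop :=
  IsModule G M ∧ ∀ M' : Set V, IsModule G M' → M ⊆ M' ∨ M' ⊆ M ∨ M ∩ M' = ∅

/-- The underlying graph of the trigraph corresponding to the partition `P` in a
contraction sequence of `G`: parts `X ≠ Y` are adjacent (by a black or red edge)
iff some edge of `G` joins them. -/
def QuotientGraph {V : Type*} [Fintype V] [DecidableEq V] (G : SimpleGraph V)
    (P : Finpartition (Finset.univ : Finset V)) :
    SimpleGraph {X : Finset V // X ∈ P.parts} where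
  Adj X Y := X ≠ Y ∧ ∃ x ∈ X.1, ∃ y ∈ Y.1, G.Adj x y
  symm := by
    refine ⟨?_⟩
    rintro X Y ⟨hne, x, hx, y, hy, hadj⟩
    exact ⟨hne.symm, y, hy, x, hx, hadj.symm⟩
  loopless := by refine ⟨?_⟩; rintro X ⟨hne, -⟩; exact hne rfl

/-- `w` lies strictly between `a` and `b` in the ordering `σ`. -/
def StrictlyBetween {V : Type*} {n : ℕ} (σ : V ≃ Fin n) (a w b : V) : Prop :=
  (σ a < σ w ∧ σ w < σ b) ∨ (σ b < σ w ∧ σ w < σ a)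

/-- `G` is distance-hereditary. -/
def DistanceHereditary {V : Type*} (G : SimpleGraph V) : Prop :=
  ∀ S : Set V, (G.induce S).Connected →
    ∀ u v : S, (G.induce S).dist u v = G.dist ↑u ↑v

/-- There is a path from `a` to `b` in `G` containing no vertex equal or adjacent to `c`. -/
def AvoidingPath {V : Type*} (G : SimpleGraph V) (a b c : V) : Prop :=
  ∃ w : G.Walk a b, w.IsPath ∧ ∀ v ∈ w.support, v ≠ c ∧ ¬ G.Adj c v

/-- `x, y, z` form an asteroidal triple of `G`. -/
def AsteroidalTriple {V : Type*} (G : SimpleGraph V) (x y z : V) : Prop :=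
  x ≠ y ∧ y ≠ z ∧ x ≠ z ∧
    AvoidingPath G x y z ∧ AvoidingPath G y z x ∧ AvoidingPath G x z y

/-- `G` is asteroidal triple-free. -/
def ATFree {V : Type*} (G : SimpleGraph V) : Prop :=
  ∀ x y z : V, ¬ AsteroidalTriple G x y z

/-- `G` is a cograph: it has no induced path on four vertices. -/
def IsCograph {V : Type*} (G : SimpleGraph V) : Prop :=
  IsEmpty (SimpleGraph.pathGraph 4 ↪g G)

section TwwDev

variable {V : Type*} [Fintype V] [DecidableEq V]

/-- One step of a contraction sequence, at the level of the finsets of parts. -/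
def PartsStep (s t : Finset (Finset V)) : Prop :=
  ∃ X ∈ s, ∃ Y ∈ s, X ≠ Y ∧ t = insert (X ∪ Y) ((s.erase X).erase Y)

lemma Homogeneous.symm {G : SimpleGraph V} {X Y : Finset V} (h : Homogeneous G X Y) :
    Homogeneous G Y X := by
  rcases h with h | h
  · exact Or.inl fun y hy x hx => (h x hx y hy).symm
  · exact Or.inr fun y hy x hx => fun hadj => h x hx y hy hadj.symm

lemma hom_of_empty {G : SimpleGraph V} {X Y : Finset V} (h : X = ∅) : Homogeneous G X Y :=
  Or.inl (by simp [h])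

/-- Parts-merge for a `Finpartition`. -/
def Finpartition.mergeParts {s : Finset V} (P : Finpartition s) (X Y : Finset V)
    (hX : X ∈ P.parts) (hY : Y ∈ P.parts) (hne : X ≠ Y) : Finpartition s where
  parts := insert (X ∪ Y) ((P.parts.erase X).erase Y)
  supIndep := by
    rw [Finset.supIndep_iff_pairwiseDisjoint]
    have hmem : ∀ B, B ∈ (P.parts.erase X).erase Y → B ∈ P.parts ∧ B ≠ X ∧ B ≠ Y :=
      fun B hB => ⟨Finset.mem_of_mem_erase (Finset.mem_of_mem_erase hB),
        (Finset.mem_erase.1 (Finset.mem_of_mem_erase hB)).1, (Finset.mem_erase.1 hB).1⟩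
    have hd : ∀ C ∈ P.parts, C ≠ X → C ≠ Y → Disjoint (id (X ∪ Y)) (id C) := by
      intro C hC hCX hCY
      simp only [id_eq, Finset.disjoint_union_left]
      exact ⟨P.disjoint hX hC (fun h => hCX h.symm), P.disjoint hY hC (fun h => hCY h.symm)⟩
    intro A hA B hB hAB
    rw [Finset.mem_coe, Finset.mem_insert] at hA hB
    rcases hA with rfl | hA
    · rcases hB with rfl | hB
      · exact absurd rfl hAB
      · obtain ⟨hBp, hBX, hBY⟩ := hmem B hB
        exact hd B hBp hBX hBY
    · obtain ⟨hAp, hAX, hAY⟩ := hmem A hA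
      rcases hB with rfl | hB
      · exact (hd A hAp hAX hAY).symm
      · exact P.disjoint hAp (hmem B hB).1 hAB
  sup_parts := by
    apply le_antisymm
    · apply Finset.sup_le
      intro A hA
      rcases Finset.mem_insert.1 hA with rfl | hA
      · exact sup_le (P.le hX) (P.le hY)
      · exact P.le (Finset.mem_of_mem_erase (Finset.mem_of_mem_erase hA))
    · conv_lhs => rw [← P.sup_parts]
      apply Finset.sup_le
      intro A hA
      by_cases hAX : A = X
      · subst hAX
        exact le_trans Finset.subset_union_left
          (Finset.le_sup (f := id) (Finset.mem_insert_self _ _))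
      by_cases hAY : A = Y
      · subst hAY
        exact le_trans Finset.subset_union_right
          (Finset.le_sup (f := id) (Finset.mem_insert_self _ _))
      · exact Finset.le_sup (Finset.mem_insert_of_mem
          (Finset.mem_erase.2 ⟨hAY, Finset.mem_erase.2 ⟨hAX, hA⟩⟩))
  bot_notMem := by
    intro h
    rcases Finset.mem_insert.1 h with h | h
    · rcases P.nonempty_of_mem_parts hX with ⟨x, hx⟩
      have : x ∈ (⊥ : Finset V) := by rw [h]; exact Finset.mem_union_left _ hx
      simpa using this
    · exact P.bot_notMem (Finset.mem_of_mem_erase (Finset.mem_of_mem_erase h))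

lemma Finpartition.mergeParts_partsStep {s : Finset V} (P : Finpartition s) {X Y : Finset V}
    (hX : X ∈ P.parts) (hY : Y ∈ P.parts) (hne : X ≠ Y) :
    PartsStep P.parts (P.mergeParts X Y hX hY hne).parts :=
  ⟨X, hX, Y, hY, hne, rfl⟩

lemma union_not_mem_erase {P : Finpartition (univ : Finset V)}
    {X Y : Finset V} (hX : X ∈ P.parts) (hY : Y ∈ P.parts) (hne : X ≠ Y) :
    X ∪ Y ∉ (P.parts.erase X).erase Y := by
  intro h
  have hZ := Finset.mem_of_mem_erase (Finset.mem_of_mem_erase h)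
  have hZX : X ∪ Y ≠ X := (Finset.mem_erase.1 (Finset.mem_of_mem_erase h)).1
  rcases P.nonempty_of_mem_parts hX with ⟨x, hx⟩
  exact hZX (P.eq_of_mem_parts hZ hX (Finset.mem_union_left _ hx) hx)

lemma PartsStep.card {P Q : Finpartition (univ : Finset V)}
    (h : PartsStep P.parts Q.parts) : Q.parts.card + 1 = P.parts.card := by
  obtain ⟨X, hX, Y, hY, hne, heq⟩ := h
  have h1 : X ∪ Y ∉ (P.parts.erase X).erase Y := union_not_mem_erase hX hY hne
  have h2 : Y ∈ P.parts.erase X := Finset.mem_erase.2 ⟨Ne.symm hne, hY⟩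
  rw [heq, Finset.card_insert_of_notMem h1, Finset.card_erase_of_mem h2,
    Finset.card_erase_of_mem hX]
  have : 2 ≤ P.parts.card := Finset.one_lt_card.2 ⟨X, hX, Y, hY, hne⟩
  omega

lemma PartsStep.two_le {P Q : Finpartition (univ : Finset V)}
    (h : PartsStep P.parts Q.parts) : 2 ≤ P.parts.card := by
  obtain ⟨X, hX, Y, hY, hne, -⟩ := h
  exact Finset.one_lt_card.2 ⟨X, hX, Y, hY, hne⟩

/-- The compression lemma: a "lazy chain" of partitions from the discrete partition to a
single part, with all ncard-of-red-neighbourhood bounds, yields a `d`-sequence. -/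
theorem exists_isDSeq_of_chain (G : SimpleGraph V) (d N : ℕ)
    (g : ℕ → Finpartition (univ : Finset V))
    (hg0 : ∀ X ∈ (g 0).parts, X.card = 1)
    (hgN : (g N).parts.card ≤ 1)
    (hstep : ∀ t < N, (g (t + 1)).parts = (g t).parts ∨ PartsStep (g t).parts (g (t + 1)).parts)
    (hred : ∀ t ≤ N, RedDegLE G (g t) d) :
    ∃ C : ContractionSeq V, IsDSeq G C d := by
  classical
  set n := Fintype.card V with hn
  set c : ℕ → ℕ := fun t => (g t).parts.card with hc
  have hc0 : c 0 = n := by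
    have := (g 0).sum_card_parts
    rw [Finset.sum_congr rfl hg0] at this
    simpa [hc, hn] using this
  have hcN : c N ≤ 1 := hgN
  have hstep' : ∀ t, t < N → c (t + 1) = c t ∨ c (t + 1) + 1 = c t := by
    intro t ht
    rcases hstep t ht with h | h
    · exact Or.inl (by simp [hc, h])
    · exact Or.inr h.card
  have hanti : ∀ t' t, t ≤ t' → t' ≤ N → c t' ≤ c t := by
    intro t'
    induction t' with
    | zero => intro t ht _; rw [Nat.le_zero.1 ht]
    | succ u ih =>
      intro t htt' ht'
      rcases Nat.eq_or_lt_of_le htt' with h | h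
      · rw [h]
      · have h1 : c (u + 1) ≤ c u := by
          rcases hstep' u (lt_of_lt_of_le (Nat.lt_succ_self u) ht') with h | h <;> omega
        exact le_trans h1 (ih t (Nat.lt_succ_iff.1 h) (le_trans (Nat.le_succ u) ht'))
  have hconst : ∀ t' t, t ≤ t' → t' ≤ N → c t = c t' → (g t).parts = (g t').parts := by
    intro t'
    induction t' with
    | zero => intro t ht _ _; rw [Nat.le_zero.1 ht]
    | succ u ih =>
      intro t htt' ht' hcc
      rcases Nat.eq_or_lt_of_le htt' with h | h
      · rw [h]
      · have htu : t ≤ u := Nat.lt_succ_iff.1 h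
        have huN : u ≤ N := le_trans (Nat.le_succ u) ht'
        have h1 : c (u + 1) ≤ c u := by
          rcases hstep' u (lt_of_lt_of_le (Nat.lt_succ_self u) ht') with h | h <;> omega
        have h2 : c u ≤ c t := hanti u t htu huN
        have hcu : c t = c u := by omega
        have hgu : (g t).parts = (g u).parts := ih t htu huN hcu
        rcases hstep u (lt_of_lt_of_le (Nat.lt_succ_self u) ht') with h | h
        · rw [hgu, h]
        · exfalso
          have hcard : c (u + 1) + 1 = c u := h.card
          omega
  -- the time at which the partition has `k` parts
  set φ : ℕ → ℕ := fun k => sSup {t | t ≤ N ∧ k ≤ c t} with hφ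
  have hφ_spec : ∀ k, 1 ≤ k → k ≤ n → φ k ≤ N ∧ k ≤ c (φ k) := by
    intro k hk1 hkn
    have hne : {t | t ≤ N ∧ k ≤ c t}.Nonempty := ⟨0, Nat.zero_le _, hc0 ▸ hkn⟩
    have hbdd : BddAbove {t | t ≤ N ∧ k ≤ c t} := ⟨N, fun t ht => ht.1⟩
    exact Nat.sSup_mem hne hbdd
  have hφ_max : ∀ k t, t ≤ N → k ≤ c t → t ≤ φ k := by
    intro k t ht hk
    exact le_csSup ⟨N, fun u hu => hu.1⟩ ⟨ht, hk⟩
  have hφ_eq : ∀ k, 1 ≤ k → k ≤ n → c (φ k) = k := by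
    intro k hk1 hkn
    obtain ⟨hφN, hkc⟩ := hφ_spec k hk1 hkn
    by_contra hne
    have hlt : k < c (φ k) := lt_of_le_of_ne hkc (Ne.symm hne)
    have hφk : φ k < N := by
      rcases Nat.eq_or_lt_of_le hφN with h | h
      · exfalso; rw [h] at hlt; omega
      · exact h
    have : k ≤ c (φ k + 1) := by
      rcases hstep' (φ k) hφk with h | h <;> omega
    exact absurd (hφ_max k (φ k + 1) hφk this) (by omega)
  refine ⟨⟨fun i => g (φ i), ?_, ?_, ?_⟩, ?_⟩
  · intro i h1 h2
    exact hφ_eq i h1 h2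
  · intro X hX
    rcases Nat.eq_zero_or_pos n with h0 | hpos
    · exfalso
      have : (g (φ n)).parts = ∅ := by
        rw [Finpartition.parts_eq_empty_iff]
        have : (univ : Finset V).card = 0 := by simpa [hn] using h0
        simpa [Finset.card_eq_zero.1 this]
      rw [this] at hX
      exact absurd hX (Finset.notMem_empty X)
    · have h1 : (g 0).parts = (g (φ n)).parts :=
        hconst (φ n) 0 (Nat.zero_le _) (hφ_spec n hpos le_rfl).1
          (by rw [hc0, hφ_eq n hpos le_rfl])
      exact hg0 X (h1 ▸ hX)
  · intro i h1 h2
    have hi1 : 1 ≤ i + 1 := by omega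
    have hin : i + 1 ≤ n := h2
    set t₀ := φ (i + 1) with ht₀
    have hct₀ : c t₀ = i + 1 := hφ_eq _ hi1 hin
    have ht₀N : t₀ < N := by
      rcases Nat.eq_or_lt_of_le (hφ_spec (i + 1) hi1 hin).1 with h | h
      · exfalso
        have hcc : c N = i + 1 := by rw [← h]; exact hct₀
        omega
      · exact h
    have hstep₀ : PartsStep (g t₀).parts (g (t₀ + 1)).parts := by
      rcases hstep t₀ ht₀N with h | h
      · exfalso
        have hcc : c (t₀ + 1) = i + 1 := by
          show (g (t₀ + 1)).parts.card = i + 1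
          rw [h]; exact hct₀
        have := hφ_max (i + 1) (t₀ + 1) ht₀N (le_of_eq hcc.symm)
        omega
      · exact h
    have hct₁ : c (t₀ + 1) = i := by
      have hcard : c (t₀ + 1) + 1 = c t₀ := hstep₀.card
      omega
    have hg₁ : (g (t₀ + 1)).parts = (g (φ i)).parts := by
      apply hconst
      · exact hφ_max i (t₀ + 1) ht₀N (le_of_eq hct₁.symm)
      · exact (hφ_spec i h1 (le_trans (Nat.le_succ i) hin)).1
      · rw [hct₁, hφ_eq i h1 (le_trans (Nat.le_succ i) hin)]
    obtain ⟨X, hX, Y, hY, hne, heq⟩ := hstep₀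
    exact ⟨X, hX, Y, hY, hne, by rw [← hg₁, heq]⟩
  · intro i h1 h2
    exact hred (φ i) (hφ_spec i h1 h2).1

lemma exists_partsStep_of_two_le {P : Finpartition (univ : Finset V)} (h : 2 ≤ P.parts.card) :
    ∃ Q : Finpartition (univ : Finset V), PartsStep P.parts Q.parts := by
  obtain ⟨X, hX, Y, hY, hne⟩ := Finset.one_lt_card.1 h
  exact ⟨P.mergeParts X Y hX hY hne, P.mergeParts_partsStep hX hY hne⟩

/-- Merge two arbitrary parts (if possible). -/
noncomputable def nextPart (P : Finpartition (univ : Finset V)) : Finpartition (univ : Finset V) :=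
  if h : 2 ≤ P.parts.card then (exists_partsStep_of_two_le h).choose else P

lemma nextPart_spec (P : Finpartition (univ : Finset V)) :
    (2 ≤ P.parts.card ∧ PartsStep P.parts (nextPart P).parts) ∨
      (P.parts.card ≤ 1 ∧ nextPart P = P) := by
  by_cases h : 2 ≤ P.parts.card
  · exact Or.inl ⟨h, by rw [nextPart, dif_pos h]; exact (exists_partsStep_of_two_le h).choose_spec⟩
  · exact Or.inr ⟨by omega, by rw [nextPart, dif_neg h]⟩

/-- An arbitrary contraction chain. -/
noncomputable def anyChain (V : Type*) [Fintype V] [DecidableEq V] :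
    ℕ → Finpartition (univ : Finset V)
  | 0 => ⊥
  | t + 1 => nextPart (anyChain V t)

lemma anyChain_card (t : ℕ) : (anyChain V t).parts.card ≤ max 1 (Fintype.card V - t) := by
  induction t with
  | zero =>
    simp only [anyChain, Finpartition.card_bot, Nat.sub_zero, Finset.card_univ]
    exact le_max_right _ _
  | succ u ih =>
    show (nextPart (anyChain V u)).parts.card ≤ _
    rcases nextPart_spec (anyChain V u) with ⟨h2, hs⟩ | ⟨h1, he⟩
    · have := hs.card
      have := le_max_iff.1 ih
      rw [le_max_iff]
      omega
    · rw [he]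
      have := le_max_iff.1 ih
      rw [le_max_iff]
      omega

lemma redDegLE_card (G : SimpleGraph V) (P : Finpartition (univ : Finset V)) :
    RedDegLE G P (Fintype.card V) := by
  intro X hX
  have h1 : {Y | Y ∈ P.parts ∧ Y ≠ X ∧ ¬Homogeneous G X Y} ⊆ ↑P.parts :=
    fun Y hY => hY.1
  calc {Y | Y ∈ P.parts ∧ Y ≠ X ∧ ¬Homogeneous G X Y}.ncard
      ≤ (↑P.parts : Set (Finset V)).ncard := Set.ncard_le_ncard h1 (P.parts.finite_toSet)
    _ = P.parts.card := Set.ncard_coe_finset _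
    _ ≤ (univ : Finset V).card := P.card_parts_le_card
    _ = Fintype.card V := Finset.card_univ

lemma twwSet_nonempty (G : SimpleGraph V) : {d | ∃ C : ContractionSeq V, IsDSeq G C d}.Nonempty := by
  refine ⟨Fintype.card V, exists_isDSeq_of_chain G (Fintype.card V) (Fintype.card V)
    (anyChain V) ?_ ?_ ?_ ?_⟩
  · intro X hX
    rw [show anyChain V 0 = ⊥ from rfl, Finpartition.mem_bot_iff] at hX
    obtain ⟨a, -, rfl⟩ := hX
    simp
  · have := anyChain_card (V := V) (Fintype.card V)
    simpa using this
  · intro t ht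
    show (nextPart (anyChain V t)).parts = _ ∨ PartsStep _ (nextPart (anyChain V t)).parts
    rcases nextPart_spec (anyChain V t) with ⟨h2, hs⟩ | ⟨h1, he⟩
    · exact Or.inr hs
    · exact Or.inl (by rw [he])
  · intro t ht
    exact redDegLE_card G _

lemma isDSeq_mono {G : SimpleGraph V} {C : ContractionSeq V} {d d' : ℕ} (hdd : d ≤ d')
    (h : IsDSeq G C d) : IsDSeq G C d' :=
  fun i h1 h2 X hX => le_trans (h i h1 h2 X hX) hdd

lemma tww_le_iff {G : SimpleGraph V} {d : ℕ} :
    tww G ≤ d ↔ ∃ C : ContractionSeq V, IsDSeq G C d := by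
  constructor
  · intro h
    obtain ⟨C, hC⟩ := Nat.sInf_mem (twwSet_nonempty G)
    exact ⟨C, isDSeq_mono h hC⟩
  · intro ⟨C, hC⟩
    exact Nat.sInf_le ⟨C, hC⟩

lemma card_setCoe (S : Finset V) : Fintype.card ↥(↑S : Set V) = S.card := by
  simp

section Induced

variable (S : Finset V)

/-- The trace of a vertex set on the induced subgraph on `S`. -/
def subOf (A : Finset V) : Finset ↥(↑S : Set V) :=
  univ.filter (fun v => ↑v ∈ A)

@[simp] lemma mem_subOf {A : Finset V} {v : ↥(↑S : Set V)} : v ∈ subOf S A ↔ ↑v ∈ A := by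
  simp [subOf]

lemma subOf_union (A B : Finset V) : subOf S (A ∪ B) = subOf S A ∪ subOf S B := by
  ext v
  rw [Finset.mem_union, mem_subOf, mem_subOf, mem_subOf, Finset.mem_union]

variable {S} in
lemma subOf_eq_of_parts {P : Finpartition (univ : Finset V)} {A B : Finset V}
    (hA : A ∈ P.parts) (hB : B ∈ P.parts) (h : subOf S A = subOf S B)
    (hne : (subOf S A).Nonempty) : A = B := by
  obtain ⟨v, hv⟩ := hne
  exact P.eq_of_mem_parts hA hB ((mem_subOf S).1 hv) ((mem_subOf S).1 (h ▸ hv))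

/-- The induced partition on `S`. -/
def indPart (P : Finpartition (univ : Finset V)) :
    Finpartition (univ : Finset ↥(↑S : Set V)) where
  parts := (P.parts.image (subOf S)).filter (·.Nonempty)
  supIndep := by
    rw [Finset.supIndep_iff_pairwiseDisjoint]
    intro A hA B hB hAB
    simp only [Finset.mem_coe, Finset.mem_filter, Finset.mem_image] at hA hB
    obtain ⟨⟨X, hX, rfl⟩, hAne⟩ := hA
    obtain ⟨⟨Y, hY, rfl⟩, hBne⟩ := hB
    have hXY : X ≠ Y := fun h => hAB (by rw [h])
    show Disjoint (subOf S X) (subOf S Y)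
    rw [Finset.disjoint_left]
    intro v hv hv'
    rw [mem_subOf] at hv hv'
    exact Finset.disjoint_left.1 (P.disjoint hX hY hXY) hv hv'
  sup_parts := by
    apply le_antisymm (Finset.sup_le fun A _ => Finset.subset_univ A)
    intro v _
    obtain ⟨X, hX, hvX⟩ := P.exists_mem (Finset.mem_univ (↑v : V))
    rw [Finset.mem_sup]
    exact ⟨subOf S X, Finset.mem_filter.2 ⟨Finset.mem_image_of_mem _ hX, ⟨v, (mem_subOf S).2 hvX⟩⟩,
      (mem_subOf S).2 hvX⟩
  bot_notMem := by
    intro h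
    rw [Finset.mem_filter] at h
    exact Finset.not_nonempty_empty h.2

lemma mem_indPart {P : Finpartition (univ : Finset V)} {B : Finset ↥(↑S : Set V)} :
    B ∈ (indPart S P).parts ↔ B.Nonempty ∧ ∃ A ∈ P.parts, subOf S A = B := by
  simp only [indPart, Finset.mem_filter, Finset.mem_image]
  tauto

lemma hom_subOf {G : SimpleGraph V} {X Y : Finset V} (h : Homogeneous G X Y) :
    Homogeneous (G.induce (↑S : Set V)) (subOf S X) (subOf S Y) := by
  rcases h with h | h
  · exact Or.inl fun x hx y hy => h ↑x ((mem_subOf S).1 hx) ↑y ((mem_subOf S).1 hy)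
  · exact Or.inr fun x hx y hy => h ↑x ((mem_subOf S).1 hx) ↑y ((mem_subOf S).1 hy)

lemma redDegLE_indPart {G : SimpleGraph V} {P : Finpartition (univ : Finset V)} {d : ℕ}
    (h : RedDegLE G P d) : RedDegLE (G.induce (↑S : Set V)) (indPart S P) d := by
  classical
  intro X' hX'
  obtain ⟨hX'ne, A0, hA0, hsub0⟩ := (mem_indPart S).1 hX'
  set ψ : Finset ↥(↑S : Set V) → Finset V := fun B =>
    if h : ∃ A ∈ P.parts, subOf S A = B then h.choose else ∅ with hψdef
  have hψ : ∀ B : Finset ↥(↑S : Set V), (∃ A ∈ P.parts, subOf S A = B) →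
      ψ B ∈ P.parts ∧ subOf S (ψ B) = B := by
    intro B hB
    rw [hψdef]
    simp only [dif_pos hB]
    exact ⟨hB.choose_spec.1, hB.choose_spec.2⟩
  have hψX : ψ X' ∈ P.parts ∧ subOf S (ψ X') = X' := hψ X' ⟨A0, hA0, hsub0⟩
  refine le_trans (Set.ncard_le_ncard_of_injOn ψ ?_ ?_ ?_) (h (ψ X') hψX.1)
  · rintro Y' ⟨hY'p, hY'ne, hY'hom⟩
    obtain ⟨hY'nonempty, A, hA, hsubA⟩ := (mem_indPart S).1 hY'p
    have hψY : ψ Y' ∈ P.parts ∧ subOf S (ψ Y') = Y' := hψ Y' ⟨A, hA, hsubA⟩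
    refine ⟨hψY.1, ?_, ?_⟩
    · intro hcon
      exact hY'ne (by rw [← hψY.2, hcon, hψX.2])
    · intro hcon
      exact hY'hom (by rw [← hψX.2, ← hψY.2]; exact hom_subOf S hcon)
  · intro Y1 h1 Y2 h2 heq
    have hψ1 : subOf S (ψ Y1) = Y1 := by
      obtain ⟨-, A, hA, hsubA⟩ := (mem_indPart S).1 h1.1
      exact (hψ Y1 ⟨A, hA, hsubA⟩).2
    have hψ2 : subOf S (ψ Y2) = Y2 := by
      obtain ⟨-, A, hA, hsubA⟩ := (mem_indPart S).1 h2.1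
      exact (hψ Y2 ⟨A, hA, hsubA⟩).2
    rw [← hψ1, ← hψ2, heq]
  · exact Set.Finite.subset (P.parts.finite_toSet) (fun Y hY => hY.1)

lemma indPart_step_empty {P P' : Finpartition (univ : Finset V)} {X Y : Finset V}
    (hX : X ∈ P.parts) (hY : Y ∈ P.parts) (hne : X ≠ Y)
    (heq : P'.parts = insert (X ∪ Y) ((P.parts.erase X).erase Y))
    (hXe : subOf S X = ∅) : (indPart S P').parts = (indPart S P).parts := by
  have hXY : subOf S (X ∪ Y) = subOf S Y := by rw [subOf_union, hXe, Finset.empty_union]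
  ext B
  rw [mem_indPart, mem_indPart]
  constructor
  · rintro ⟨hBne, A, hA, rfl⟩
    rw [heq, Finset.mem_insert] at hA
    rcases hA with rfl | hA
    · exact ⟨hBne, Y, hY, hXY.symm⟩
    · exact ⟨hBne, A, Finset.mem_of_mem_erase (Finset.mem_of_mem_erase hA), rfl⟩
  · rintro ⟨hBne, A, hA, rfl⟩
    by_cases hAX : A = X
    · exfalso; rw [hAX, hXe] at hBne; exact Finset.not_nonempty_empty hBne
    by_cases hAY : A = Y
    · subst hAY
      exact ⟨hBne, X ∪ A, by rw [heq]; exact Finset.mem_insert_self _ _, hXY⟩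
    · exact ⟨hBne, A, by
        rw [heq]
        exact Finset.mem_insert_of_mem
          (Finset.mem_erase.2 ⟨hAY, Finset.mem_erase.2 ⟨hAX, hA⟩⟩), rfl⟩

lemma indPart_step {P P' : Finpartition (univ : Finset V)}
    (h : PartsStep P.parts P'.parts) :
    (indPart S P').parts = (indPart S P).parts ∨
      PartsStep (indPart S P).parts (indPart S P').parts := by
  obtain ⟨X, hX, Y, hY, hne, heq⟩ := h
  by_cases hXe : subOf S X = ∅
  · exact Or.inl (indPart_step_empty S hX hY hne heq hXe)
  by_cases hYe : subOf S Y = ∅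
  · refine Or.inl (indPart_step_empty S hY hX (Ne.symm hne) ?_ hYe)
    rw [heq, Finset.union_comm, Finset.erase_right_comm]
  · -- both traces nonempty: a genuine merge
    have hXne : (subOf S X).Nonempty := Finset.nonempty_iff_ne_empty.2 hXe
    have hYne : (subOf S Y).Nonempty := Finset.nonempty_iff_ne_empty.2 hYe
    have hsne : subOf S X ≠ subOf S Y := by
      intro hcon
      exact hne (subOf_eq_of_parts hX hY hcon hXne)
    refine Or.inr ⟨subOf S X, (mem_indPart S).2 ⟨hXne, X, hX, rfl⟩,
      subOf S Y, (mem_indPart S).2 ⟨hYne, Y, hY, rfl⟩, hsne, ?_⟩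
    ext B
    rw [mem_indPart, Finset.mem_insert, Finset.mem_erase, Finset.mem_erase]
    constructor
    · rintro ⟨hBne, A, hA, rfl⟩
      rw [heq, Finset.mem_insert] at hA
      rcases hA with rfl | hA
      · exact Or.inl (subOf_union S X Y)
      · have hAp : A ∈ P.parts := Finset.mem_of_mem_erase (Finset.mem_of_mem_erase hA)
        have hAX : A ≠ X := (Finset.mem_erase.1 (Finset.mem_of_mem_erase hA)).1
        have hAY : A ≠ Y := (Finset.mem_erase.1 hA).1
        refine Or.inr ⟨?_, ?_, (mem_indPart S).2 ⟨hBne, A, hAp, rfl⟩⟩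
        · intro hcon; exact hAY (subOf_eq_of_parts hAp hY hcon hBne)
        · intro hcon; exact hAX (subOf_eq_of_parts hAp hX hcon hBne)
    · rintro (rfl | ⟨hBY, hBX, hB⟩)
      · refine ⟨⟨hXne.choose, Finset.mem_union_left _ hXne.choose_spec⟩, X ∪ Y,
          by rw [heq]; exact Finset.mem_insert_self _ _, subOf_union S X Y⟩
      · obtain ⟨hBne, A, hA, rfl⟩ := (mem_indPart S).1 hB
        have hAX : A ≠ X := fun hcon => hBX (by rw [hcon])
        have hAY : A ≠ Y := fun hcon => hBY (by rw [hcon])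
        exact ⟨hBne, A, by
          rw [heq]
          exact Finset.mem_insert_of_mem
            (Finset.mem_erase.2 ⟨hAY, Finset.mem_erase.2 ⟨hAX, hA⟩⟩), rfl⟩

theorem tww_induce_le (G : SimpleGraph V) (S : Finset V) :
    tww (G.induce (↑S : Set V)) ≤ tww G := by
  classical
  obtain ⟨C, hC⟩ := Nat.sInf_mem (twwSet_nonempty G)
  set n := Fintype.card V with hn
  have hE : Fintype.card ↥(↑S : Set V) = S.card := card_setCoe S
  rcases Nat.eq_zero_or_pos n with h0 | hpos
  · -- the empty case
    have hW : Fintype.card ↥(↑S : Set V) = 0 := by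
      rw [hE]
      have h1 : S.card ≤ (univ : Finset V).card := Finset.card_le_card (Finset.subset_univ S)
      have h2 : (univ : Finset V).card = 0 := by rw [Finset.card_univ, ← hn, h0]
      omega
    have hempty : IsEmpty ↥(↑S : Set V) := Fintype.card_eq_zero_iff.1 hW
    refine tww_le_iff.mpr (exists_isDSeq_of_chain (G.induce (↑S : Set V)) (tww G) 0
      (fun _ => ⊥) ?_ ?_ ?_ ?_)
    · intro X hX
      rw [Finpartition.mem_bot_iff] at hX
      obtain ⟨a, -, rfl⟩ := hX
      simp
    · rw [Finpartition.card_bot, Finset.card_univ, hW]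
      omega
    · intro t ht
      exact absurd ht (by omega)
    · intro t ht X hX
      exfalso
      rw [Finpartition.mem_bot_iff] at hX
      obtain ⟨a, -, -⟩ := hX
      exact hempty.elim a
  · refine tww_le_iff.mpr (exists_isDSeq_of_chain (G.induce (↑S : Set V)) (tww G) (n - 1)
      (fun t => indPart S (C.parts (n - min t (n - 1)))) ?_ ?_ ?_ ?_)
    · intro B hB
      beta_reduce at hB
      rw [Nat.zero_min, Nat.sub_zero] at hB
      obtain ⟨hBne, A, hA, rfl⟩ := (mem_indPart S).1 hB
      have hA1 : A.card = 1 := C.parts_top A (by rw [← hn]; exact hA)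
      obtain ⟨a, rfl⟩ := Finset.card_eq_one.1 hA1
      apply le_antisymm
      · refine Finset.card_le_one.2 fun u hu v hv => ?_
        rw [mem_subOf, Finset.mem_singleton] at hu hv
        exact Subtype.ext (hu.trans hv.symm)
      · exact Finset.card_pos.2 hBne
    · beta_reduce
      rw [Nat.min_self]
      have hidx : n - (n - 1) = 1 := by omega
      rw [hidx]
      have h1 : (C.parts 1).parts.card = 1 := C.parts_card 1 le_rfl (by omega)
      calc (indPart S (C.parts 1)).parts.card
          ≤ ((C.parts 1).parts.image (subOf S)).card := Finset.card_filter_le _ _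
        _ ≤ (C.parts 1).parts.card := Finset.card_image_le
        _ ≤ 1 := le_of_eq h1
    · intro t ht
      have hmt : min t (n - 1) = t := min_eq_left (by omega)
      have hmt1 : min (t + 1) (n - 1) = t + 1 := min_eq_left (by omega)
      beta_reduce
      rw [hmt, hmt1]
      have hmerge := C.merge (n - t - 1) (by omega) (by omega)
      have hidx : n - t - 1 + 1 = n - t := by omega
      rw [hidx] at hmerge
      obtain ⟨X, hX, Y, hY, hXY, heq⟩ := hmerge
      have : n - (t + 1) = n - t - 1 := by omega
      rw [this]
      exact indPart_step S ⟨X, hX, Y, hY, hXY, heq⟩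
    · intro t ht
      beta_reduce
      exact redDegLE_indPart S (hC (n - min t (n - 1)) (by omega) (by omega))

end Induced

lemma parts_eq_singleton {s : Finset V} (Q : Finpartition s) (h : Q.parts.card = 1) :
    Q.parts = {s} := by
  obtain ⟨B, hB⟩ := Finset.card_eq_one.1 h
  have hs := Q.sup_parts
  rw [hB, Finset.sup_singleton, id_eq] at hs
  rw [hB, hs]

lemma PartsStep.image_of_inj {W : Type*} [DecidableEq W] {s t : Finset (Finset W)}
    (f : Finset W → Finset V) (hf : Function.Injective f)
    (hfu : ∀ A B : Finset W, f (A ∪ B) = f A ∪ f B)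
    (h : PartsStep (V := W) s t) : PartsStep (s.image f) (t.image f) := by
  obtain ⟨X, hX, Y, hY, hne, heq⟩ := h
  refine ⟨f X, Finset.mem_image_of_mem f hX, f Y, Finset.mem_image_of_mem f hY,
    fun h => hne (hf h), ?_⟩
  rw [heq, Finset.image_insert, hfu, Finset.image_erase hf, Finset.image_erase hf]

section Lift

variable (M : Finset V)

/-- Push a set of vertices of the induced graph on `M` up to `V`. -/
def up (B : Finset ↥(↑M : Set V)) : Finset V := B.image Subtype.val

lemma up_injective : Function.Injective (up M) :=
  Finset.image_injective Subtype.val_injective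

lemma mem_up {B : Finset ↥(↑M : Set V)} {v : V} :
    v ∈ up M B ↔ ∃ w ∈ B, ↑w = v := Finset.mem_image

lemma up_subset {B : Finset ↥(↑M : Set V)} : up M B ⊆ M := by
  intro v hv
  obtain ⟨w, -, rfl⟩ := (mem_up M).1 hv
  exact w.2

lemma up_union (A B : Finset ↥(↑M : Set V)) : up M (A ∪ B) = up M A ∪ up M B :=
  Finset.image_union _ _

lemma up_nonempty {B : Finset ↥(↑M : Set V)} (h : B.Nonempty) : (up M B).Nonempty :=
  h.image _

/-- A partition of the vertices of the induced graph on `M`, as a partition of `M`. -/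
def liftPart (Q : Finpartition (univ : Finset ↥(↑M : Set V))) : Finpartition M where
  parts := Q.parts.image (up M)
  supIndep := by
    rw [Finset.supIndep_iff_pairwiseDisjoint]
    intro A hA B hB hAB
    simp only [Finset.mem_coe, Finset.mem_image] at hA hB
    obtain ⟨X, hX, rfl⟩ := hA
    obtain ⟨Y, hY, rfl⟩ := hB
    have hXY : X ≠ Y := fun h => hAB (by rw [h])
    show Disjoint (up M X) (up M Y)
    rw [Finset.disjoint_left]
    intro v hv hv'
    obtain ⟨w, hw, rfl⟩ := (mem_up M).1 hv
    obtain ⟨w', hw', hww⟩ := (mem_up M).1 hv'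
    rw [Subtype.val_injective hww] at hw'
    exact Finset.disjoint_left.1 (Q.disjoint hX hY hXY) hw hw'
  sup_parts := by
    apply le_antisymm
    · apply Finset.sup_le
      intro A hA
      obtain ⟨X, -, rfl⟩ := Finset.mem_image.1 hA
      exact up_subset M
    · intro v hv
      obtain ⟨X, hX, hvX⟩ := Q.exists_mem (Finset.mem_univ (⟨v, hv⟩ : ↥(↑M : Set V)))
      rw [Finset.mem_sup]
      exact ⟨up M X, Finset.mem_image_of_mem _ hX, (mem_up M).2 ⟨⟨v, hv⟩, hvX, rfl⟩⟩
  bot_notMem := by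
    intro h
    obtain ⟨X, hX, hXe⟩ := Finset.mem_image.1 h
    obtain ⟨w, hw⟩ := Q.nonempty_of_mem_parts hX
    have : (w : V) ∈ up M X := (mem_up M).2 ⟨w, hw, rfl⟩
    rw [hXe] at this
    simpa using this

lemma mem_liftPart {Q : Finpartition (univ : Finset ↥(↑M : Set V))} {B : Finset V} :
    B ∈ (liftPart M Q).parts ↔ ∃ B' ∈ Q.parts, up M B' = B := Finset.mem_image

lemma hom_up {G : SimpleGraph V} {A B : Finset ↥(↑M : Set V)}
    (h : Homogeneous (G.induce (↑M : Set V)) A B) : Homogeneous G (up M A) (up M B) := by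
  rcases h with h | h
  · refine Or.inl fun x hx y hy => ?_
    obtain ⟨a, ha, rfl⟩ := (mem_up M).1 hx
    obtain ⟨b, hb, rfl⟩ := (mem_up M).1 hy
    exact h a ha b hb
  · refine Or.inr fun x hx y hy => ?_
    obtain ⟨a, ha, rfl⟩ := (mem_up M).1 hx
    obtain ⟨b, hb, rfl⟩ := (mem_up M).1 hy
    exact h a ha b hb

end Lift

section Cross

variable {G : SimpleGraph V} {P : Finpartition (univ : Finset V)}

lemma adj_cross (hmod : ∀ M ∈ P.parts, IsModule G (↑M : Set V))
    {M₁ M₂ : Finset V} (h1 : M₁ ∈ P.parts) (h2 : M₂ ∈ P.parts) (hne : M₁ ≠ M₂)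
    {x x' y y' : V} (hx : x ∈ M₁) (hx' : x' ∈ M₁) (hy : y ∈ M₂) (hy' : y' ∈ M₂)
    (hadj : G.Adj x y) : G.Adj x' y' := by
  have hyM1 : y ∉ (↑M₁ : Set V) := by
    intro hcon
    exact Finset.disjoint_left.1 (P.disjoint h1 h2 hne) (by simpa using hcon) hy
  rcases hmod (↑M₁) h1 y hyM1 with hall | hnone
  · have h3 : G.Adj y x' := hall x' (by simpa using hx')
    have hx'M2 : x' ∉ (↑M₂ : Set V) := by
      intro hcon
      exact Finset.disjoint_left.1 (P.disjoint h1 h2 hne) hx' (by simpa using hcon)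
    rcases hmod (↑M₂) h2 x' hx'M2 with hall2 | hnone2
    · exact hall2 y' (by simpa using hy')
    · exact absurd h3.symm (hnone2 y (by simpa using hy))
  · exact absurd hadj.symm (hnone x (by simpa using hx))

lemma hom_cross (hmod : ∀ M ∈ P.parts, IsModule G (↑M : Set V))
    {M₁ M₂ : Finset V} (h1 : M₁ ∈ P.parts) (h2 : M₂ ∈ P.parts) (hne : M₁ ≠ M₂)
    {X Y : Finset V} (hX : X ⊆ M₁) (hY : Y ⊆ M₂) : Homogeneous G X Y := by
  rcases Finset.eq_empty_or_nonempty X with rfl | ⟨x₀, hx₀⟩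
  · exact Or.inl (by simp)
  rcases Finset.eq_empty_or_nonempty Y with rfl | ⟨y₀, hy₀⟩
  · exact Or.inl (by simp)
  by_cases hadj : G.Adj x₀ y₀
  · exact Or.inl fun x hx y hy =>
      adj_cross hmod h1 h2 hne (hX hx₀) (hX hx) (hY hy₀) (hY hy) hadj
  · exact Or.inr fun x hx y hy hcon =>
      hadj (adj_cross hmod h1 h2 hne (hX hx) (hX hx₀) (hY hy) (hY hy₀) hcon)

end Cross

section Blow

variable (P : Finpartition (univ : Finset V)) (R : Finset V)

/-- Blow up a set of representatives to the union of their modules. -/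
def blow (B : Finset ↥(↑R : Set V)) : Finset V := B.biUnion (fun r => P.part ↑r)

lemma mem_blow {B : Finset ↥(↑R : Set V)} {v : V} :
    v ∈ blow P R B ↔ ∃ r ∈ B, v ∈ P.part ↑r := Finset.mem_biUnion

lemma blow_union (A B : Finset ↥(↑R : Set V)) :
    blow P R (A ∪ B) = blow P R A ∪ blow P R B := by
  ext v
  rw [Finset.mem_union, mem_blow, mem_blow, mem_blow]
  constructor
  · rintro ⟨r, hr, hv⟩
    rcases Finset.mem_union.1 hr with h | h
    · exact Or.inl ⟨r, h, hv⟩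
    · exact Or.inr ⟨r, h, hv⟩
  · rintro (⟨r, hr, hv⟩ | ⟨r, hr, hv⟩)
    · exact ⟨r, Finset.mem_union_left _ hr, hv⟩
    · exact ⟨r, Finset.mem_union_right _ hr, hv⟩

variable {P R} (hR : ∀ M ∈ P.parts, (R ∩ M).card = 1)

include hR in
lemma rep_unique {r s : V} (hr : r ∈ R) (hs : s ∈ R) (h : P.part r = P.part s) : r = s := by
  have h1 : r ∈ R ∩ P.part r := Finset.mem_inter.2 ⟨hr, P.mem_part (Finset.mem_univ r)⟩
  have h2 : s ∈ R ∩ P.part r := Finset.mem_inter.2 ⟨hs, h ▸ P.mem_part (Finset.mem_univ s)⟩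
  exact Finset.card_le_one.1 (le_of_eq (hR _ (P.part_mem.2 (Finset.mem_univ r)))) r h1 s h2

include hR in
lemma blow_injective : Function.Injective (blow P R) := by
  have key : ∀ B B' : Finset ↥(↑R : Set V), blow P R B = blow P R B' → B ⊆ B' := by
    intro B B' h r hr
    have h1 : ↑r ∈ blow P R B := (mem_blow P R).2 ⟨r, hr, P.mem_part (Finset.mem_univ _)⟩
    rw [h] at h1
    obtain ⟨s, hs, hrs⟩ := (mem_blow P R).1 h1
    have heqp : P.part ↑r = P.part ↑s :=
      P.part_eq_of_mem (P.part_mem.2 (Finset.mem_univ (↑s : V))) hrs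
    have : (↑r : V) = ↑s := rep_unique hR (by simpa using r.2) (by simpa using s.2) heqp
    rwa [Subtype.ext this]
  intro B B' h
  exact le_antisymm (key B B' h) (key B' B h.symm)

/-- Blow up a partition of the representatives to a partition of all vertices. -/
def blowup (Q : Finpartition (univ : Finset ↥(↑R : Set V))) :
    Finpartition (univ : Finset V) where
  parts := Q.parts.image (blow P R)
  supIndep := by
    rw [Finset.supIndep_iff_pairwiseDisjoint]
    intro A hA B hB hAB
    simp only [Finset.mem_coe, Finset.mem_image] at hA hB
    obtain ⟨X, hX, rfl⟩ := hA
    obtain ⟨Y, hY, rfl⟩ := hB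
    have hXY : X ≠ Y := fun h => hAB (by rw [h])
    show Disjoint (blow P R X) (blow P R Y)
    rw [Finset.disjoint_left]
    intro v hv hv'
    obtain ⟨r, hr, hvr⟩ := (mem_blow P R).1 hv
    obtain ⟨s, hs, hvs⟩ := (mem_blow P R).1 hv'
    have h1 : P.part v = P.part ↑r := P.part_eq_of_mem (P.part_mem.2 (Finset.mem_univ _)) hvr
    have h2 : P.part v = P.part ↑s := P.part_eq_of_mem (P.part_mem.2 (Finset.mem_univ _)) hvs
    have hrs : r = s :=
      Subtype.ext (rep_unique hR (by simpa using r.2) (by simpa using s.2) (h1 ▸ h2))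
    exact Finset.disjoint_left.1 (Q.disjoint hX hY hXY) hr (hrs ▸ hs)
  sup_parts := by
    apply le_antisymm (Finset.sup_le fun A _ => Finset.subset_univ A)
    intro v _
    have hM : P.part v ∈ P.parts := P.part_mem.2 (Finset.mem_univ v)
    obtain ⟨r, hr⟩ := Finset.card_eq_one.1 (hR _ hM)
    have hrR : r ∈ R ∧ r ∈ P.part v := by
      have : r ∈ R ∩ P.part v := hr ▸ Finset.mem_singleton_self r
      exact Finset.mem_inter.1 this
    obtain ⟨B, hB, hrB⟩ := Q.exists_mem (Finset.mem_univ (⟨r, hrR.1⟩ : ↥(↑R : Set V)))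
    rw [Finset.mem_sup]
    refine ⟨blow P R B, Finset.mem_image_of_mem _ hB, (mem_blow P R).2 ⟨⟨r, hrR.1⟩, hrB, ?_⟩⟩
    rw [P.part_eq_of_mem hM hrR.2]
    exact P.mem_part (Finset.mem_univ v)
  bot_notMem := by
    intro h
    obtain ⟨X, hX, hXe⟩ := Finset.mem_image.1 h
    obtain ⟨r, hr⟩ := Q.nonempty_of_mem_parts hX
    have : (↑r : V) ∈ blow P R X :=
      (mem_blow P R).2 ⟨r, hr, P.mem_part (Finset.mem_univ _)⟩
    rw [hXe] at this
    simpa using this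

lemma mem_blowup {Q : Finpartition (univ : Finset ↥(↑R : Set V))} {B : Finset V} :
    B ∈ (blowup hR Q).parts ↔ ∃ B' ∈ Q.parts, blow P R B' = B := Finset.mem_image

include hR in
lemma hom_blow {G : SimpleGraph V} (hmod : ∀ M ∈ P.parts, IsModule G (↑M : Set V))
    {A B : Finset ↥(↑R : Set V)} (hd : Disjoint A B)
    (h : Homogeneous (G.induce (↑R : Set V)) A B) :
    Homogeneous G (blow P R A) (blow P R B) := by
  have key : ∀ (r s : ↥(↑R : Set V)), r ∈ A → s ∈ B → ∀ v w, v ∈ P.part ↑r → w ∈ P.part ↑s →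
      G.Adj ↑r ↑s → G.Adj v w := by
    intro r s hr hs v w hv hw hadj
    have hne : P.part (↑r : V) ≠ P.part ↑s := by
      intro hcon
      have : r = s := Subtype.ext (rep_unique hR (by simpa using r.2) (by simpa using s.2) hcon)
      exact Finset.disjoint_left.1 hd hr (this ▸ hs)
    exact adj_cross hmod (P.part_mem.2 (Finset.mem_univ _)) (P.part_mem.2 (Finset.mem_univ _)) hne
      (P.mem_part (Finset.mem_univ _)) hv (P.mem_part (Finset.mem_univ _)) hw hadj
  rcases h with h | h
  · refine Or.inl fun v hv w hw => ?_
    obtain ⟨r, hr, hvr⟩ := (mem_blow P R).1 hv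
    obtain ⟨s, hs, hws⟩ := (mem_blow P R).1 hw
    exact key r s hr hs v w hvr hws (h r hr s hs)
  · refine Or.inr fun v hv w hw hcon => ?_
    obtain ⟨r, hr, hvr⟩ := (mem_blow P R).1 hv
    obtain ⟨s, hs, hws⟩ := (mem_blow P R).1 hw
    have hne : P.part (↑r : V) ≠ P.part ↑s := by
      intro hcon'
      have : r = s := Subtype.ext (rep_unique hR (by simpa using r.2) (by simpa using s.2) hcon')
      exact Finset.disjoint_left.1 hd hr (this ▸ hs)
    refine h r hr s hs ?_
    show G.Adj ↑r ↑s
    exact adj_cross hmod (P.part_mem.2 (Finset.mem_univ _)) (P.part_mem.2 (Finset.mem_univ _)) hne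
      hvr (P.mem_part (Finset.mem_univ _)) hws (P.mem_part (Finset.mem_univ _)) hcon

end Blow

section ModChain

/-- The partition of the module `M` after `t` merge steps of the sequence `C`. -/
noncomputable def modChain (M : Finset V) (C : ContractionSeq ↥(↑M : Set V)) (t : ℕ) :
    Finpartition M := liftPart M (C.parts (M.card - min t (M.card - 1)))

variable {M : Finset V} {C : ContractionSeq ↥(↑M : Set V)}

lemma modChain_congr {t t' : ℕ} (h : min t (M.card - 1) = min t' (M.card - 1)) :
    modChain M C t = modChain M C t' := by rw [modChain, modChain, h]

lemma modChain_frozen (hm : 0 < M.card) {t : ℕ} (ht : M.card - 1 ≤ t) :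
    (modChain M C t).parts = {M} := by
  have hmin : min t (M.card - 1) = M.card - 1 := min_eq_right ht
  have hidx : M.card - (M.card - 1) = 1 := by omega
  rw [modChain, hmin, hidx]
  apply parts_eq_singleton
  show ((C.parts 1).parts.image (up M)).card = 1
  rw [Finset.card_image_of_injective _ (up_injective M)]
  exact C.parts_card 1 le_rfl (by rw [card_setCoe]; exact hm)

lemma modChain_zero : ∀ B ∈ (modChain M C 0).parts, B.card = 1 := by
  intro B hB
  rw [modChain, Nat.zero_min, Nat.sub_zero] at hB
  obtain ⟨B', hB', rfl⟩ := (mem_liftPart M).1 hB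
  have h1 : B'.card = 1 := by
    apply C.parts_top
    rwa [card_setCoe]
  rw [up, Finset.card_image_of_injective _ Subtype.val_injective, h1]

lemma modChain_step {t : ℕ} (ht : t + 1 ≤ M.card - 1) :
    PartsStep (modChain M C t).parts (modChain M C (t + 1)).parts := by
  have hmt : min t (M.card - 1) = t := min_eq_left (by omega)
  have hmt1 : min (t + 1) (M.card - 1) = t + 1 := min_eq_left ht
  have hmerge := C.merge (M.card - (t + 1)) (by omega)
    (by rw [card_setCoe]; omega)
  have hidx : M.card - (t + 1) + 1 = M.card - t := by omega
  rw [hidx] at hmerge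
  obtain ⟨X, hX, Y, hY, hne, heq⟩ := hmerge
  have hstep : PartsStep (C.parts (M.card - t)).parts (C.parts (M.card - (t + 1))).parts :=
    ⟨X, hX, Y, hY, hne, heq⟩
  have := PartsStep.image_of_inj (up M) (up_injective M) (up_union M) hstep
  rw [modChain, modChain, hmt, hmt1]
  exact this

lemma modChain_red {G : SimpleGraph V} {D : ℕ} (hm : 0 < M.card)
    (hC : IsDSeq (G.induce (↑M : Set V)) C D) (t : ℕ) {X₀ : Finset V}
    (hX₀ : X₀ ∈ (modChain M C t).parts) :
    {Y | Y ∈ (modChain M C t).parts ∧ Y ≠ X₀ ∧ ¬ Homogeneous G X₀ Y}.ncard ≤ D := by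
  set i := M.card - min t (M.card - 1) with hi
  have hi1 : 1 ≤ i := by omega
  have hi2 : i ≤ Fintype.card ↥(↑M : Set V) := by rw [card_setCoe]; omega
  obtain ⟨X₀', hX₀', rfl⟩ := (mem_liftPart M).1 hX₀
  have hsmall := hC i hi1 hi2 X₀' hX₀'
  set small := {Y' | Y' ∈ (C.parts i).parts ∧ Y' ≠ X₀' ∧
    ¬ Homogeneous (G.induce (↑M : Set V)) X₀' Y'} with hsmalldef
  have hsub : {Y | Y ∈ (modChain M C t).parts ∧ Y ≠ up M X₀' ∧ ¬ Homogeneous G (up M X₀') Y}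
      ⊆ (up M) '' small := by
    rintro Y ⟨hYp, hYne, hYhom⟩
    obtain ⟨Y', hY', rfl⟩ := (mem_liftPart M).1 hYp
    refine ⟨Y', ⟨hY', ?_, ?_⟩, rfl⟩
    · intro hcon; exact hYne (by rw [hcon])
    · intro hcon; exact hYhom (hom_up M hcon)
  have hfin : small.Finite :=
    Set.Finite.subset (C.parts i).parts.finite_toSet (fun Y hY => hY.1)
  calc {Y | Y ∈ (modChain M C t).parts ∧ Y ≠ up M X₀' ∧ ¬ Homogeneous G (up M X₀') Y}.ncard
      ≤ ((up M) '' small).ncard := Set.ncard_le_ncard hsub (hfin.image _)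
    _ ≤ small.ncard := Set.ncard_image_le hfin
    _ ≤ D := hsmall

end ModChain

section QuotChain

variable {P : Finpartition (univ : Finset V)} {R : Finset V}
  (hR : ∀ M ∈ P.parts, (R ∩ M).card = 1)

/-- The partition of `V` after `k` merge steps of the quotient sequence `C`. -/
noncomputable def quotChain (C : ContractionSeq ↥(↑R : Set V)) (k : ℕ) :
    Finpartition (univ : Finset V) :=
  blowup hR (C.parts (R.card - min k (R.card - 1)))

variable {C : ContractionSeq ↥(↑R : Set V)}

lemma quotChain_congr {k k' : ℕ} (h : min k (R.card - 1) = min k' (R.card - 1)) :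
    quotChain hR C k = quotChain hR C k' := by rw [quotChain, quotChain, h]

lemma quotChain_final (hr : 0 < R.card) {k : ℕ} (hk : R.card - 1 ≤ k) :
    (quotChain hR C k).parts.card ≤ 1 := by
  have hmin : min k (R.card - 1) = R.card - 1 := min_eq_right hk
  have hidx : R.card - (R.card - 1) = 1 := by omega
  rw [quotChain, hmin, hidx]
  show ((C.parts 1).parts.image (blow P R)).card ≤ 1
  calc ((C.parts 1).parts.image (blow P R)).card ≤ (C.parts 1).parts.card :=
        Finset.card_image_le
    _ ≤ 1 := le_of_eq (C.parts_card 1 le_rfl (by rw [card_setCoe]; exact hr))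

lemma quotChain_zero : (quotChain hR C 0).parts = P.parts := by
  rw [quotChain, Nat.zero_min, Nat.sub_zero]
  ext B
  rw [mem_blowup hR]
  constructor
  · rintro ⟨B', hB', rfl⟩
    have h1 : B'.card = 1 := by
      apply (C.parts_top)
      rwa [card_setCoe]
    obtain ⟨r, rfl⟩ := Finset.card_eq_one.1 h1
    have : blow P R {r} = P.part ↑r := Finset.singleton_biUnion
    rw [this]
    exact P.part_mem.2 (Finset.mem_univ _)
  · intro hB
    obtain ⟨r, hr⟩ := Finset.card_eq_one.1 (hR B hB)
    have hrRB : r ∈ R ∧ r ∈ B := Finset.mem_inter.1 (hr ▸ Finset.mem_singleton_self r)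
    obtain ⟨B', hB', hrB'⟩ := (C.parts R.card).exists_mem
      (Finset.mem_univ (⟨r, hrRB.1⟩ : ↥(↑R : Set V)))
    have h1 : B'.card = 1 := by
      apply C.parts_top
      rwa [card_setCoe]
    obtain ⟨r', rfl⟩ := Finset.card_eq_one.1 h1
    rw [Finset.mem_singleton] at hrB'
    refine ⟨{r'}, hB', ?_⟩
    have hbs : blow P R {r'} = P.part ↑r' := Finset.singleton_biUnion
    rw [hbs, ← hrB']
    exact P.part_eq_of_mem hB hrRB.2
  
lemma quotChain_step {k : ℕ} (hk : k + 1 ≤ R.card - 1) :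
    PartsStep (quotChain hR C k).parts (quotChain hR C (k + 1)).parts := by
  have hmt : min k (R.card - 1) = k := min_eq_left (by omega)
  have hmt1 : min (k + 1) (R.card - 1) = k + 1 := min_eq_left hk
  have hmerge := C.merge (R.card - (k + 1)) (by omega) (by rw [card_setCoe]; omega)
  have hidx : R.card - (k + 1) + 1 = R.card - k := by omega
  rw [hidx] at hmerge
  obtain ⟨X, hX, Y, hY, hne, heq⟩ := hmerge
  have hstep : PartsStep (C.parts (R.card - k)).parts (C.parts (R.card - (k + 1))).parts :=
    ⟨X, hX, Y, hY, hne, heq⟩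
  have := PartsStep.image_of_inj (blow P R) (blow_injective hR) (blow_union P R) hstep
  rw [quotChain, quotChain, hmt, hmt1]
  exact this

lemma quotChain_red {G : SimpleGraph V} {D : ℕ} (hr : 0 < R.card)
    (hmod : ∀ M ∈ P.parts, IsModule G (↑M : Set V))
    (hC : IsDSeq (G.induce (↑R : Set V)) C D) (k : ℕ) :
    RedDegLE G (quotChain hR C k) D := by
  intro X₀ hX₀
  set i := R.card - min k (R.card - 1) with hi
  have hi1 : 1 ≤ i := by omega
  have hi2 : i ≤ Fintype.card ↥(↑R : Set V) := by rw [card_setCoe]; omega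
  obtain ⟨X₀', hX₀', rfl⟩ := (mem_blowup hR).1 hX₀
  have hsmall := hC i hi1 hi2 X₀' hX₀'
  set small := {Y' | Y' ∈ (C.parts i).parts ∧ Y' ≠ X₀' ∧
    ¬ Homogeneous (G.induce (↑R : Set V)) X₀' Y'} with hsmalldef
  have hsub : {Y | Y ∈ (quotChain hR C k).parts ∧ Y ≠ blow P R X₀' ∧
      ¬ Homogeneous G (blow P R X₀') Y} ⊆ (blow P R) '' small := by
    rintro Y ⟨hYp, hYne, hYhom⟩
    obtain ⟨Y', hY', rfl⟩ := (mem_blowup hR).1 hYp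
    have hY'ne : Y' ≠ X₀' := fun hcon => hYne (by rw [hcon])
    refine ⟨Y', ⟨hY', hY'ne, ?_⟩, rfl⟩
    intro hcon
    exact hYhom (hom_blow hR hmod ((C.parts i).disjoint hX₀' hY' (Ne.symm hY'ne)) hcon)
  have hfin : small.Finite :=
    Set.Finite.subset (C.parts i).parts.finite_toSet (fun Y hY => hY.1)
  calc {Y | Y ∈ (quotChain hR C k).parts ∧ Y ≠ blow P R X₀' ∧
      ¬ Homogeneous G (blow P R X₀') Y}.ncard
      ≤ ((blow P R) '' small).ncard := Set.ncard_le_ncard hsub (hfin.image _)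
    _ ≤ small.ncard := Set.ncard_image_le hfin
    _ ≤ D := hsmall

end QuotChain

section ModuleState

variable (P : Finpartition (univ : Finset V))

/-- The index of a module in the enumeration of the parts. -/
noncomputable def midx (M : Finset V) (hM : M ∈ P.parts) : ℕ :=
  (P.parts.equivFin ⟨M, hM⟩ : ℕ)

lemma midx_lt {M : Finset V} (hM : M ∈ P.parts) : midx P M hM < P.parts.card :=
  (P.parts.equivFin ⟨M, hM⟩).2

lemma midx_inj {M M' : Finset V} {hM : M ∈ P.parts} {hM' : M' ∈ P.parts}
    (h : midx P M hM = midx P M' hM') : M = M' := by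
  have h2 := P.parts.equivFin.injective (Fin.ext h)
  exact congrArg Subtype.val h2

variable (CS : ∀ M ∈ P.parts, ContractionSeq ↥(↑M : Set V))

/-- The global partition after `t` steps of the concatenated module sequences, where
module `i` works during the time window `[i·n, (i+1)·n)`. -/
noncomputable def moduleState (t : ℕ) : Finpartition (univ : Finset V) :=
  P.bind (fun M hM => modChain M (CS M hM) (t - midx P M hM * Fintype.card V))

lemma mem_moduleState {t : ℕ} {B : Finset V} :
    B ∈ (moduleState P CS t).parts ↔
      ∃ M hM, B ∈ (modChain M (CS M hM) (t - midx P M hM * Fintype.card V)).parts :=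
  Finpartition.mem_bind

lemma part_card_pos {M : Finset V} (hM : M ∈ P.parts) : 0 < M.card :=
  Finset.card_pos.2 (P.nonempty_of_mem_parts hM)

lemma part_card_le {M : Finset V} (hM : M ∈ P.parts) : M.card ≤ Fintype.card V := by
  rw [← Finset.card_univ]
  exact Finset.card_le_card (Finset.subset_univ M)

lemma moduleState_zero : ∀ B ∈ (moduleState P CS 0).parts, B.card = 1 := by
  intro B hB
  obtain ⟨M, hM, hB'⟩ := (mem_moduleState P CS).1 hB
  rw [Nat.zero_sub] at hB'
  exact modChain_zero B hB'

lemma moduleState_late {t : ℕ} (ht : P.parts.card * Fintype.card V ≤ t) :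
    (moduleState P CS t).parts = P.parts := by
  ext B
  rw [mem_moduleState]
  constructor
  · rintro ⟨M, hM, hB⟩
    have hfr : (modChain M (CS M hM) (t - midx P M hM * Fintype.card V)).parts = {M} := by
      apply modChain_frozen (part_card_pos P hM)
      have h1 := midx_lt P hM
      have h2 := part_card_le P hM
      have h3 : (midx P M hM + 1) * Fintype.card V ≤ P.parts.card * Fintype.card V :=
        Nat.mul_le_mul_right _ (by omega)
      rw [Nat.add_mul, Nat.one_mul] at h3
      omega
    rw [hfr, Finset.mem_singleton] at hB
    rwa [hB]
  · intro hB
    refine ⟨B, hB, ?_⟩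
    have hfr : (modChain B (CS B hB) (t - midx P B hB * Fintype.card V)).parts = {B} := by
      apply modChain_frozen (part_card_pos P hB)
      have h1 := midx_lt P hB
      have h2 := part_card_le P hB
      have h3 : (midx P B hB + 1) * Fintype.card V ≤ P.parts.card * Fintype.card V :=
        Nat.mul_le_mul_right _ (by omega)
      rw [Nat.add_mul, Nat.one_mul] at h3
      omega
    rw [hfr]
    exact Finset.mem_singleton_self B

lemma moduleState_step (hn : 0 < Fintype.card V) {t : ℕ}
    (ht : t + 1 ≤ P.parts.card * Fintype.card V) :
    (moduleState P CS (t + 1)).parts = (moduleState P CS t).parts ∨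
      PartsStep (moduleState P CS t).parts (moduleState P CS (t + 1)).parts := by
  set n := Fintype.card V with hn'
  set ℓ := P.parts.card with hℓ
  set j := t / n with hj'
  have hjn : j * n ≤ t := by
    rw [hj']
    exact Nat.div_mul_le_self t n
  have htjn : t < (j + 1) * n := by
    rw [hj']
    have h1 : n * (t / n) + t % n = t := Nat.div_add_mod t n
    have h2 : t % n < n := Nat.mod_lt t hn
    have h3 : (t / n + 1) * n = n * (t / n) + n := by ring
    omega
  rw [Nat.add_mul, Nat.one_mul] at htjn
  have hjℓ : j < ℓ := by
    by_contra hcon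
    push_neg at hcon
    have : ℓ * n ≤ j * n := Nat.mul_le_mul_right _ hcon
    omega
  set Ma := P.parts.equivFin.symm ⟨j, by rwa [← hℓ]⟩ with hMa
  have hMaj : ∀ h : (Ma : Finset V) ∈ P.parts, midx P (↑Ma) h = j := by
    intro h
    show ((P.parts.equivFin ⟨↑Ma, h⟩ : Fin _) : ℕ) = j
    have he : (⟨↑Ma, h⟩ : {x // x ∈ P.parts}) = Ma := Subtype.ext rfl
    rw [he, hMa, Equiv.apply_symm_apply]
  set t' := t - j * n with ht'
  have ht'n : t' < n := by omega
  have hfrozen : ∀ (M : Finset V) (hM : M ∈ P.parts), M ≠ Ma.1 →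
      modChain M (CS M hM) ((t + 1) - midx P M hM * n) =
        modChain M (CS M hM) (t - midx P M hM * n) := by
    intro M hM hne
    have hidxne : midx P M hM ≠ j := by
      intro hcon
      exact hne (midx_inj P (hcon.trans (hMaj Ma.2).symm))
    rcases Nat.lt_or_ge (midx P M hM) j with hlt | hge
    · have h1 : (midx P M hM + 1) * n ≤ j * n := Nat.mul_le_mul_right _ (by omega)
      rw [Nat.add_mul, Nat.one_mul] at h1
      have h2 : M.card ≤ n := part_card_le P hM
      apply modChain_congr
      rw [min_eq_right (by omega), min_eq_right (by omega)]
    · have hge' : j + 1 ≤ midx P M hM := by omega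
      have h1 : (j + 1) * n ≤ midx P M hM * n := Nat.mul_le_mul_right _ hge'
      rw [Nat.add_mul, Nat.one_mul] at h1
      have h2 : (t + 1) - midx P M hM * n = 0 := by omega
      have h3 : t - midx P M hM * n = 0 := by omega
      rw [h2, h3]
  by_cases hfro : Ma.1.card - 1 ≤ t'
  · -- all modules frozen at this step
    left
    have hall : ∀ (M : Finset V) (hM : M ∈ P.parts),
        modChain M (CS M hM) ((t + 1) - midx P M hM * n) =
          modChain M (CS M hM) (t - midx P M hM * n) := by
      intro M hM
      by_cases hne : M = Ma.1
      · subst hne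
        rw [hMaj hM]
        apply modChain_congr
        rw [min_eq_right (by omega), min_eq_right (by omega)]
      · exact hfrozen M hM hne
    ext B
    rw [mem_moduleState, mem_moduleState]
    constructor
    · rintro ⟨M, hM, hB⟩
      exact ⟨M, hM, by rwa [hall M hM] at hB⟩
    · rintro ⟨M, hM, hB⟩
      exact ⟨M, hM, by rwa [hall M hM]⟩
  · -- the active module makes a step
    right
    have hstep : PartsStep (modChain Ma.1 (CS Ma.1 Ma.2) t').parts
        (modChain Ma.1 (CS Ma.1 Ma.2) (t' + 1)).parts :=
      modChain_step (by omega)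
    have hMat : t - midx P Ma.1 Ma.2 * n = t' := by rw [hMaj Ma.2]
    have hMat1 : (t + 1) - midx P Ma.1 Ma.2 * n = t' + 1 := by rw [hMaj Ma.2]; omega
    obtain ⟨fX, hfX, fY, hfY, hneXY, heqMa⟩ := hstep
    have hsubM : ∀ (M : Finset V) (hM : M ∈ P.parts) (u : ℕ) (B : Finset V),
        B ∈ (modChain M (CS M hM) u).parts → B ⊆ M ∧ B.Nonempty := by
      intro M hM u B hB
      exact ⟨(modChain M (CS M hM) u).le hB, (modChain M (CS M hM) u).nonempty_of_mem_parts hB⟩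
    have hfXMa : fX ⊆ Ma.1 ∧ fX.Nonempty := hsubM Ma.1 Ma.2 t' fX hfX
    have hfYMa : fY ⊆ Ma.1 ∧ fY.Nonempty := hsubM Ma.1 Ma.2 t' fY hfY
    have hother : ∀ (M : Finset V) (hM : M ∈ P.parts), M ≠ Ma.1 → ∀ (u : ℕ) (B : Finset V),
        B ∈ (modChain M (CS M hM) u).parts → ∀ Z : Finset V, Z ⊆ Ma.1 → Z.Nonempty → B ≠ Z := by
      rintro M hM hne u B hB Z hZ hZne rfl
      obtain ⟨z, hz⟩ := hZne
      exact Finset.disjoint_left.1 (P.disjoint hM Ma.2 hne) ((hsubM M hM u _ hB).1 hz) (hZ hz)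
    refine ⟨fX, (mem_moduleState P CS).2 ⟨Ma.1, Ma.2, by rwa [hMat]⟩,
      fY, (mem_moduleState P CS).2 ⟨Ma.1, Ma.2, by rwa [hMat]⟩, hneXY, ?_⟩
    ext B
    rw [mem_moduleState, Finset.mem_insert, Finset.mem_erase, Finset.mem_erase]
    constructor
    · rintro ⟨M, hM, hB⟩
      by_cases hne : M = Ma.1
      · subst hne
        have hB2 : B ∈ (modChain Ma.1 (CS Ma.1 Ma.2) (t' + 1)).parts := by
          have e : (t + 1) - midx P Ma.1 hM * n = t' + 1 := by rw [hMaj hM]; omega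
          rw [e] at hB
          exact hB
        rw [heqMa, Finset.mem_insert] at hB2
        rcases hB2 with rfl | hB2
        · exact Or.inl rfl
        · refine Or.inr ⟨(Finset.mem_erase.1 hB2).1, (Finset.mem_erase.1
            (Finset.mem_of_mem_erase hB2)).1, (mem_moduleState P CS).2 ⟨Ma.1, Ma.2, ?_⟩⟩
          rw [hMat]
          exact Finset.mem_of_mem_erase (Finset.mem_of_mem_erase hB2)
      · rw [hfrozen M hM hne] at hB
        refine Or.inr ⟨?_, ?_, (mem_moduleState P CS).2 ⟨M, hM, hB⟩⟩
        · exact hother M hM hne _ B hB fY hfYMa.1 hfYMa.2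
        · exact hother M hM hne _ B hB fX hfXMa.1 hfXMa.2
    · rintro (rfl | ⟨hBY, hBX, hB⟩)
      · refine ⟨Ma.1, Ma.2, ?_⟩
        rw [hMat1, heqMa]
        exact Finset.mem_insert_self _ _
      · obtain ⟨M, hM, hB'⟩ := (mem_moduleState P CS).1 hB
        by_cases hne : M = Ma.1
        · subst hne
          have hB2 : B ∈ (modChain Ma.1 (CS Ma.1 Ma.2) t').parts := by
            have e : t - midx P Ma.1 hM * n = t' := by rw [hMaj hM]
            rw [e] at hB'
            exact hB'
          refine ⟨Ma.1, Ma.2, ?_⟩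
          rw [hMat1, heqMa]
          exact Finset.mem_insert_of_mem
            (Finset.mem_erase.2 ⟨hBY, Finset.mem_erase.2 ⟨hBX, hB2⟩⟩)
        · exact ⟨M, hM, by rwa [hfrozen M hM hne]⟩

lemma moduleState_red {G : SimpleGraph V} {D : ℕ}
    (hmod : ∀ M ∈ P.parts, IsModule G (↑M : Set V))
    (hCS : ∀ M (hM : M ∈ P.parts), IsDSeq (G.induce (↑M : Set V)) (CS M hM) D) (t : ℕ) :
    RedDegLE G (moduleState P CS t) D := by
  intro X₀ hX₀
  obtain ⟨M, hM, hX₀'⟩ := (mem_moduleState P CS).1 hX₀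
  set u := t - midx P M hM * Fintype.card V with hu
  have hsub : {Y | Y ∈ (moduleState P CS t).parts ∧ Y ≠ X₀ ∧ ¬ Homogeneous G X₀ Y} ⊆
      {Y | Y ∈ (modChain M (CS M hM) u).parts ∧ Y ≠ X₀ ∧ ¬ Homogeneous G X₀ Y} := by
    rintro Y ⟨hYp, hYne, hYhom⟩
    obtain ⟨M', hM', hY'⟩ := (mem_moduleState P CS).1 hYp
    by_cases hne : M' = M
    · subst hne
      exact ⟨hY', hYne, hYhom⟩
    · exfalso
      apply hYhom
      have h1 : X₀ ⊆ M := (modChain M (CS M hM) u).le hX₀'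
      have h2 : Y ⊆ M' := (modChain M' (CS M' hM') _).le hY'
      exact (hom_cross hmod hM' hM hne h2 h1).symm
  have hfin : {Y | Y ∈ (modChain M (CS M hM) u).parts ∧ Y ≠ X₀ ∧ ¬ Homogeneous G X₀ Y}.Finite :=
    Set.Finite.subset (modChain M (CS M hM) u).parts.finite_toSet (fun Y hY => hY.1)
  exact le_trans (Set.ncard_le_ncard hsub hfin)
    (modChain_red (part_card_pos P hM) (hCS M hM) u hX₀')

end ModuleState

theorem tww_le_max (G : SimpleGraph V) (P : Finpartition (univ : Finset V))
    (hmod : ∀ M ∈ P.parts, IsModule G (↑M : Set V))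
    (R : Finset V) (hR : ∀ M ∈ P.parts, (R ∩ M).card = 1)
    (hpos : 0 < Fintype.card V) :
    tww G ≤ max (tww (G.induce (↑R : Set V)))
      (P.parts.sup fun M => tww (G.induce (↑M : Set V))) := by
  classical
  set n := Fintype.card V with hn
  set ℓ := P.parts.card with hℓ
  set D := max (tww (G.induce (↑R : Set V)))
    (P.parts.sup fun M => tww (G.induce (↑M : Set V))) with hD
  have hMD : ∀ (M : Finset V), M ∈ P.parts →
      ∃ C : ContractionSeq ↥(↑M : Set V), IsDSeq (G.induce (↑M : Set V)) C D := by
    intro M hM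
    apply tww_le_iff.1
    rw [hD]
    have hstep : (fun M : Finset V => tww (G.induce (↑M : Set V))) M ≤
        P.parts.sup (fun M : Finset V => tww (G.induce (↑M : Set V))) :=
      Finset.le_sup (f := fun M : Finset V => tww (G.induce (↑M : Set V))) hM
    exact le_trans hstep (le_max_right _ _)
  choose CS hCS using hMD
  obtain ⟨CR, hCR⟩ : ∃ C : ContractionSeq ↥(↑R : Set V), IsDSeq (G.induce (↑R : Set V)) C D :=
    tww_le_iff.1 (le_max_left _ _)
  have hℓpos : 0 < ℓ := by
    rw [hℓ, Finset.card_pos, Finset.nonempty_iff_ne_empty]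
    intro hcon
    rw [Finpartition.parts_eq_empty_iff] at hcon
    have h1 : (univ : Finset V).card = 0 := by
      rw [hcon]
      exact Finset.card_empty
    rw [Finset.card_univ] at h1
    omega
  have hRcard : R.card = ℓ := by
    have hcover : R = P.parts.biUnion (fun M => R ∩ M) := by
      ext r
      simp only [Finset.mem_biUnion, Finset.mem_inter]
      constructor
      · intro hr
        obtain ⟨M, hM, hrM⟩ := P.exists_mem (Finset.mem_univ r)
        exact ⟨M, hM, hr, hrM⟩
      · rintro ⟨M, -, hr, -⟩
        exact hr
    have hdisj : ∀ x ∈ P.parts, ∀ y ∈ P.parts, x ≠ y → Disjoint (R ∩ x) (R ∩ y) := by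
      intro x hx y hy hxy
      rw [Finset.disjoint_left]
      intro r hr hr'
      exact Finset.disjoint_left.1 (P.disjoint hx hy hxy) (Finset.mem_inter.1 hr).2
        (Finset.mem_inter.1 hr').2
    rw [hcover, Finset.card_biUnion hdisj, Finset.sum_congr rfl hR]
    simp [hℓ]
  have hRpos : 0 < R.card := by omega
  have hRn : R.card ≤ n := by
    rw [hn, ← Finset.card_univ (α := V)]
    exact Finset.card_le_card (Finset.subset_univ R)
  have hen : ℓ * n = P.parts.card * Fintype.card V := by rw [hℓ, hn]
  refine tww_le_iff.mpr (exists_isDSeq_of_chain G D (ℓ * n + n)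
    (fun t => if t < ℓ * n then moduleState P CS t else quotChain hR CR (t - ℓ * n))
    ?_ ?_ ?_ ?_)
  · intro X hX
    beta_reduce at hX
    rw [if_pos (Nat.mul_pos hℓpos hpos)] at hX
    exact moduleState_zero P CS X hX
  · beta_reduce
    rw [if_neg (by omega)]
    have hsub : ℓ * n + n - ℓ * n = n := by omega
    rw [hsub]
    exact quotChain_final hR hRpos (by omega)
  · intro t ht
    beta_reduce
    by_cases h1 : t + 1 < ℓ * n
    · rw [if_pos h1, if_pos (show t < ℓ * n from by omega)]
      exact moduleState_step P CS hpos (by omega)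
    by_cases h2 : t < ℓ * n
    · -- boundary step
      have heq1 : t + 1 = ℓ * n := by omega
      rw [if_pos h2, if_neg (show ¬ (t + 1 < ℓ * n) from h1)]
      have hq0 : (quotChain hR CR (t + 1 - ℓ * n)).parts = (moduleState P CS (t + 1)).parts := by
        have e : t + 1 - ℓ * n = 0 := by omega
        have hle : P.parts.card * Fintype.card V ≤ t + 1 := by omega
        have hlate : (moduleState P CS (t + 1)).parts = P.parts :=
          moduleState_late P CS hle
        rw [e, quotChain_zero hR, hlate]
      have hle2 : t + 1 ≤ P.parts.card * Fintype.card V := by omega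
      rcases moduleState_step P CS hpos hle2 with h | h
      · exact Or.inl (by rw [hq0, h])
      · exact Or.inr (by rw [hq0]; exact h)
    · -- quotient phase
      rw [if_neg h2, if_neg (show ¬ (t + 1 < ℓ * n) from by omega)]
      have e : t + 1 - ℓ * n = (t - ℓ * n) + 1 := by omega
      rw [e]
      set k := t - ℓ * n with hk
      by_cases h3 : k + 1 ≤ R.card - 1
      · exact Or.inr (quotChain_step hR h3)
      · refine Or.inl ?_
        have hc : quotChain hR CR (k + 1) = quotChain hR CR k := by
          apply quotChain_congr
          rw [min_eq_right (by omega), min_eq_right (by omega)]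
        rw [hc]
  · intro t ht
    beta_reduce
    by_cases h : t < ℓ * n
    · rw [if_pos h]
      exact moduleState_red P CS hmod hCS t
    · rw [if_neg h]
      exact quotChain_red hR hRpos hmod hCR (t - ℓ * n)

lemma tww_eq_zero_of_card_eq_zero (G : SimpleGraph V) (h : Fintype.card V = 0) : tww G = 0 := by
  have hempty : IsEmpty V := Fintype.card_eq_zero_iff.1 h
  apply Nat.le_zero.1
  refine tww_le_iff.mpr (exists_isDSeq_of_chain G 0 0 (fun _ => ⊥) ?_ ?_ ?_ ?_)
  · intro X hX
    rw [Finpartition.mem_bot_iff] at hX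
    obtain ⟨a, -, rfl⟩ := hX
    simp
  · rw [Finpartition.card_bot, Finset.card_univ, h]
    omega
  · intro t ht
    exact absurd ht (by omega)
  · intro t ht X hX
    exfalso
    rw [Finpartition.mem_bot_iff] at hX
    obtain ⟨a, -, -⟩ := hX
    exact hempty.elim a

end TwwDev

/-- For a modular partition `𝓜 = (M_1, …, M_ℓ)` of `G` and a transversal
`R` (one vertex from each part), `tww(G) = max(tww(G/𝓜), max_i tww(G[M_i]))`, where
`G/𝓜 = G[R]`. -/
theorem stmt_12 {V : Type*} [Fintype V] [DecidableEq V] (G : SimpleGraph V)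
    (P : Finpartition (Finset.univ : Finset V))
    (hmod : ∀ M ∈ P.parts, IsModule G (↑M : Set V))
    (R : Finset V) (hR : ∀ M ∈ P.parts, (R ∩ M).card = 1) :
    tww G =
      max (tww (G.induce (↑R : Set V)))
        (P.parts.sup fun M => tww (G.induce (↑M : Set V))) := by
  classical
  rcases Nat.eq_zero_or_pos (Fintype.card V) with h0 | hpos
  · have hempty : IsEmpty V := Fintype.card_eq_zero_iff.1 h0
    have h1 : tww G = 0 := tww_eq_zero_of_card_eq_zero G h0
    have h2 : tww (G.induce (↑R : Set V)) = 0 := by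
      apply tww_eq_zero_of_card_eq_zero
      rw [card_setCoe]
      have : R.card ≤ (univ : Finset V).card := Finset.card_le_card (Finset.subset_univ R)
      rw [Finset.card_univ, h0] at this
      omega
    have h3 : P.parts = ∅ := by
      rw [Finpartition.parts_eq_empty_iff]
      have : (univ : Finset V) = ∅ := Finset.univ_eq_empty
      rw [this]
      rfl
    rw [h1, h2, h3, Finset.sup_empty]
    rfl
  · apply le_antisymm
    · exact tww_le_max G P hmod R hR hpos
    · apply max_le
      · exact tww_induce_le G R
      · exact Finset.sup_le (fun M hM => tww_induce_le G M)
end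

section
/- Let G be a permutation graph on n vertices and let M ⊆ V(G) be a strong module of G. Then for every realiser (σ, τ) of G, the set M is a common interval of (σ, τ), i.e., both σ(M) and τ(M) are sets of consecutive integers. -/
open Finset

private lemma same_order {V : Type*} [Fintype V] {G : SimpleGraph V}
    {σ τ : V ≃ Fin (Fintype.card V)} (hreal : IsRealiser G σ τ)
    {a b : V} (hne : a ≠ b) (hnadj : ¬ G.Adj a b) :
    σ a < σ b ↔ τ a < τ b := by
  have hσ : σ a ≠ σ b := fun h => hne (σ.injective h)
  have hτ : τ a ≠ τ b := fun h => hne (τ.injective h)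
  rw [hreal a b] at hnadj
  push_neg at hnadj
  constructor
  · intro h
    exact lt_of_le_of_ne (hnadj.1 h) hτ
  · intro h
    rcases hσ.lt_or_gt with h' | h'
    · exact h'
    · exact absurd h (not_lt.2 (hnadj.2 h'))

private lemma adj_flip {V : Type*} [Fintype V] {G : SimpleGraph V}
    {σ τ : V ≃ Fin (Fintype.card V)} (hreal : IsRealiser G σ τ)
    {a b : V} (hadj : G.Adj a b) (h : σ a < σ b) : τ b < τ a := by
  rcases (hreal a b).1 hadj with ⟨_, h'⟩ | ⟨h', _⟩
  · exact h'
  · exact absurd h (asymm h')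

private lemma key_contr {V : Type*} [Fintype V] {G : SimpleGraph V}
    {σ τ : V ≃ Fin (Fintype.card V)} (hreal : IsRealiser G σ τ)
    {M : Set V} (hM : IsStrongModule G M) {v : V} (hv : v ∉ M)
    (hvn : ∀ m ∈ M, ¬ G.Adj v m) {u w : V} (hu : u ∈ M) (hw : w ∈ M)
    (h1 : σ u < σ v) (h2 : σ v < σ w) : False := by
  classical
  have hvne : ∀ m ∈ M, v ≠ m := fun m hm h => hv (by rw [h]; exact hm)
  have star1 : ∀ m ∈ M, (σ m < σ v ↔ τ m < τ v) := fun m hm =>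
    same_order hreal (fun h => hv (by rw [h] at hm; exact hm)) (fun h => hvn m hm h.symm)
  have star2 : ∀ m ∈ M, (σ v < σ m ↔ τ v < τ m) := fun m hm =>
    same_order hreal (hvne m hm) (hvn m hm)
  set C : Set V := {x | x ∉ M ∧ (∀ m ∈ M, σ m < σ v → σ m < σ x) ∧
      (∀ m ∈ M, σ v < σ m → σ x < σ m)} with hCdef
  have hvC : v ∈ C := ⟨hv, fun _ _ h => h, fun _ _ h => h⟩
  have hCnon : ∀ c ∈ C, ∀ m ∈ M, ¬ G.Adj c m := by
    intro c hc
    rcases hM.1 c hc.1 with hadj | hnon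
    · exfalso
      have hcu : σ u < σ c := hc.2.1 u hu h1
      have hcw : σ c < σ w := hc.2.2 w hw h2
      have t1 : τ c < τ u := adj_flip hreal ((hadj u hu).symm) hcu
      have t2 : τ w < τ c := adj_flip hreal (hadj w hw) hcw
      have t3 : τ u < τ v := (star1 u hu).1 h1
      have t4 : τ v < τ w := (star2 w hw).1 h2
      exact absurd (t1.trans t3) (asymm (t4.trans t2))
    · exact hnon
  have starC : ∀ c ∈ C, ∀ m ∈ M, (σ m < σ c ↔ τ m < τ c) := fun c hc m hm =>
    same_order hreal (fun h => hc.1 (by rw [← h]; exact hm))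
      (fun h => hCnon c hc m hm h.symm)
  have starC' : ∀ c ∈ C, ∀ m ∈ M, (σ c < σ m ↔ τ c < τ m) := fun c hc m hm =>
    same_order hreal (fun h => hc.1 (by rw [h]; exact hm)) (hCnon c hc m hm)
  set N : Set V := {x | x ∈ M ∧ σ x < σ v} ∪ C with hNdef
  have hNmod : IsModule G N := by
    intro x hx
    have hxC : x ∉ C := fun h => hx (Or.inr h)
    by_cases hxM : x ∈ M
    · have hσx : σ v < σ x := by
        have hne : σ v ≠ σ x := fun h => hv (by rw [σ.injective h]; exact hxM)
        rcases hne.lt_or_gt with h | h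
        · exact h
        · exact absurd (Or.inl ⟨hxM, h⟩) hx
      right
      rintro c (⟨hcM, hcσ⟩ | hcC)
      · have t1 : τ c < τ x := ((star1 c hcM).1 hcσ).trans ((star2 x hxM).1 hσx)
        have s1 : σ c < σ x := hcσ.trans hσx
        rw [hreal]
        rintro (⟨h, -⟩ | ⟨-, h⟩)
        · exact absurd s1 (asymm h)
        · exact absurd t1 (asymm h)
      · exact fun h => hCnon c hcC x hxM h.symm
    · obtain ⟨m0, hm0M, hm0⟩ :
          ∃ m0 ∈ M, (σ m0 < σ v ∧ σ x < σ m0) ∨ (σ v < σ m0 ∧ σ m0 < σ x) := by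
        by_contra hcon
        apply hxC
        refine ⟨hxM, fun m hm hmv => ?_, fun m hm hvm => ?_⟩
        · have hne : σ m ≠ σ x := fun h => hxM (by rw [← σ.injective h]; exact hm)
          rcases hne.lt_or_gt with h | h
          · exact h
          · exact absurd ⟨m, hm, Or.inl ⟨hmv, h⟩⟩ hcon
        · have hne : σ x ≠ σ m := fun h => hxM (by rw [σ.injective h]; exact hm)
          rcases hne.lt_or_gt with h | h
          · exact h
          · exact absurd ⟨m, hm, Or.inr ⟨hvm, h⟩⟩ hcon
      have hxne : ∀ m ∈ M, x ≠ m := fun m hm h => hxM (by rw [h]; exact hm)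
      rcases hM.1 x hxM with hadj | hnon
      · left
        rintro c (⟨hcM, _⟩ | hcC)
        · exact hadj c hcM
        · rcases hm0 with ⟨hm0v, hxm0⟩ | ⟨hvm0, hm0x⟩
          · have sc : σ x < σ c := hxm0.trans (hcC.2.1 m0 hm0M hm0v)
            have sxw : σ x < σ w := hxm0.trans (hm0v.trans h2)
            have tc : τ c < τ x :=
              ((starC' c hcC w hw).1 (hcC.2.2 w hw h2)).trans (adj_flip hreal (hadj w hw) sxw)
            exact (hreal x c).2 (Or.inl ⟨sc, tc⟩)
          · have sc : σ c < σ x := (hcC.2.2 m0 hm0M hvm0).trans hm0x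
            have sux : σ u < σ x := h1.trans (hvm0.trans hm0x)
            have tc : τ x < τ c :=
              (adj_flip hreal ((hadj u hu).symm) sux).trans ((starC c hcC u hu).1 (hcC.2.1 u hu h1))
            exact (hreal x c).2 (Or.inr ⟨sc, tc⟩)
      · right
        rintro c (⟨hcM, _⟩ | hcC)
        · exact hnon c hcM
        · have sxm : ∀ m ∈ M, (σ x < σ m ↔ τ x < τ m) := fun m hm =>
            same_order hreal (hxne m hm) (hnon m hm)
          have smx : ∀ m ∈ M, (σ m < σ x ↔ τ m < τ x) := fun m hm =>
            same_order hreal (fun h => (hxne m hm) h.symm) (fun h => hnon m hm h.symm)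
          rcases hm0 with ⟨hm0v, hxm0⟩ | ⟨hvm0, hm0x⟩
          · have sc : σ x < σ c := hxm0.trans (hcC.2.1 m0 hm0M hm0v)
            have tc : τ x < τ c :=
              ((sxm m0 hm0M).1 hxm0).trans ((starC c hcC m0 hm0M).1 (hcC.2.1 m0 hm0M hm0v))
            rw [hreal]
            rintro (⟨-, h⟩ | ⟨h, -⟩)
            · exact absurd tc (asymm h)
            · exact absurd sc (asymm h)
          · have sc : σ c < σ x := (hcC.2.2 m0 hm0M hvm0).trans hm0x
            have tc : τ c < τ x :=
              ((starC' c hcC m0 hm0M).1 (hcC.2.2 m0 hm0M hvm0)).trans ((smx m0 hm0M).1 hm0x)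
            rw [hreal]
            rintro (⟨h, -⟩ | ⟨-, h⟩)
            · exact absurd sc (asymm h)
            · exact absurd tc (asymm h)
  rcases hM.2 N hNmod with hsub | hsub | hdis
  · rcases hsub hw with ⟨-, h⟩ | hC'
    · exact absurd h (asymm h2)
    · exact hC'.1 hw
  · exact hv (hsub (Or.inr hvC))
  · have hmem : u ∈ M ∩ N := ⟨hu, Or.inl ⟨hu, h1⟩⟩
    rw [hdis] at hmem
    exact hmem

private lemma isModule_compl {V : Type*} {G : SimpleGraph V} {M : Set V}
    (h : IsModule G M) : IsModule Gᶜ M := by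
  intro v hv
  rcases h v hv with ha | hn
  · right
    intro m hm hc
    exact hc.2 (ha m hm)
  · left
    intro m hm
    exact ⟨fun he => hv (by rw [he]; exact hm), hn m hm⟩

private lemma isStrongModule_compl {V : Type*} {G : SimpleGraph V} {M : Set V}
    (h : IsStrongModule G M) : IsStrongModule Gᶜ M := by
  refine ⟨isModule_compl h.1, fun M' hM' => h.2 M' ?_⟩
  have := isModule_compl hM'
  rwa [compl_compl] at this

private lemma realiser_compl {V : Type*} [Fintype V] {G : SimpleGraph V}
    {σ τ : V ≃ Fin (Fintype.card V)} (hreal : IsRealiser G σ τ) :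
    IsRealiser Gᶜ σ (τ.trans Fin.revPerm) := by
  intro a b
  rw [SimpleGraph.compl_adj]
  simp only [Equiv.trans_apply, Fin.revPerm_apply, Fin.rev_lt_rev]
  constructor
  · rintro ⟨hne, hnadj⟩
    have h := same_order hreal hne hnadj
    have hσ : σ a ≠ σ b := fun hh => hne (σ.injective hh)
    rcases hσ.lt_or_gt with h' | h'
    · exact Or.inl ⟨h', h.1 h'⟩
    · have hτ : τ b < τ a := by
        have := same_order hreal hne.symm (fun hh => hnadj hh.symm)
        exact this.1 h'
      exact Or.inr ⟨h', hτ⟩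
  · rintro (⟨h, h'⟩ | ⟨h, h'⟩)
    · refine ⟨fun he => (by rw [he] at h; exact lt_irrefl _ h), ?_⟩
      rw [hreal]
      rintro (⟨-, hh⟩ | ⟨hh, -⟩)
      · exact absurd h' (asymm hh)
      · exact absurd h (asymm hh)
    · refine ⟨fun he => (by rw [he] at h; exact lt_irrefl _ h), ?_⟩
      rw [hreal]
      rintro (⟨hh, -⟩ | ⟨-, hh⟩)
      · exact absurd h (asymm hh)
      · exact absurd h' (asymm hh)

private lemma interval_of_strong {V : Type*} [Fintype V] {G : SimpleGraph V}
    {σ τ : V ≃ Fin (Fintype.card V)} (hreal : IsRealiser G σ τ)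
    {M : Set V} (hM : IsStrongModule G M) : IsIntervalFor σ M := by
  intro a b c ha hc h1 h2
  by_contra hb
  have hab : σ a ≠ σ b := fun h => hb (by rw [← σ.injective h]; exact ha)
  have hbc : σ b ≠ σ c := fun h => hb (by rw [σ.injective h]; exact hc)
  have h1' : σ a < σ b := lt_of_le_of_ne h1 hab
  have h2' : σ b < σ c := lt_of_le_of_ne h2 hbc
  rcases hM.1 b hb with hadj | hnon
  · exact key_contr (realiser_compl hreal) (isStrongModule_compl hM) hb
      (fun m hm h => h.2 (hadj m hm)) ha hc h1' h2'
  · exact key_contr hreal hM hb hnon ha hc h1' h2'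

/-- If `M` is a strong module of a permutation graph `G`, then `M` is a
common interval of every realiser of `G`. -/
theorem stmt_14 {V : Type*} [Fintype V] (G : SimpleGraph V)
    (hperm : IsPermutationGraph G) (M : Set V) (hM : IsStrongModule G M)
    (σ τ : V ≃ Fin (Fintype.card V)) (hreal : IsRealiser G σ τ) :
    IsIntervalFor σ M ∧ IsIntervalFor τ M := by
  have hreal' : IsRealiser G τ σ := by
    intro a b
    rw [hreal a b]
    tauto
  exact ⟨interval_of_strong hreal hM, interval_of_strong hreal' hM⟩
end

section
/- If G is a bipartite graph and G_n, …, G_1 is a 1-contraction sequence of G, then the underlying graph of every trigraph G_i is bipartite. -/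
open Finset

/-- If `G` is bipartite and `G_n, …, G_1` is a 1-contraction sequence of
`G`, then the underlying graph of every trigraph `G_i` is bipartite. -/
theorem stmt_15 {V : Type*} [Fintype V] [DecidableEq V] (G : SimpleGraph V)
    (hbip : G.Colorable 2)
    (C : ContractionSeq V) (hC : IsDSeq G C 1)
    (i : ℕ) (h1 : 1 ≤ i) (hn : i ≤ Fintype.card V) :
    (QuotientGraph G (C.parts i)).Colorable 2 := by
  classical
  obtain ⟨c⟩ := hbip
  set P := C.parts i with hPdef
  have hred : RedDegLE G P 1 := hC i h1 hn
  set Q := {X : Finset V // X ∈ P.parts} with hQdef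
  have hne_part : ∀ X : Q, X.1.Nonempty := fun X => P.nonempty_of_mem_parts X.2
  let rep : Q → V := fun X => (hne_part X).choose
  have hrep : ∀ X : Q, rep X ∈ X.1 := fun X => (hne_part X).choose_spec
  let Mono : Q → Prop := fun X => ∀ x ∈ X.1, ∀ y ∈ X.1, c x = c y
  let e := Fintype.equivFin Q
  have fin2 : ∀ a b x : Fin 2, a ≠ x → b ≠ x → a = b := by decide
  have fin2' : ∀ a : Fin 2, a ≠ a + 1 := by decide
  -- adjacency unfolding
  have hadj_iff : ∀ X Y : Q, (QuotientGraph G P).Adj X Y ↔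
      (X ≠ Y ∧ ∃ x ∈ X.1, ∃ y ∈ Y.1, G.Adj x y) := fun X Y => Iff.rfl
  -- a non-monochromatic part has only red (non-homogeneous) neighbours
  have hredadj : ∀ X Y : Q, ¬ Mono X → (QuotientGraph G P).Adj X Y →
      ¬ Homogeneous G X.1 Y.1 := by
    intro X Y hX hadj hom
    obtain ⟨hne, x, hx, y, hy, hxy⟩ := (hadj_iff X Y).1 hadj
    rcases hom with hcomp | hanti
    · simp only [Mono, not_forall] at hX
      obtain ⟨x1, hx1, x2, hx2, h12⟩ := hX
      obtain ⟨y0, hy0⟩ := hne_part Y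
      exact h12 (fin2 _ _ (c y0) (c.valid (hcomp x1 hx1 y0 hy0))
        (c.valid (hcomp x2 hx2 y0 hy0)))
    · exact hanti x hx y hy hxy
  -- a non-monochromatic part has at most one neighbour
  have huniq : ∀ X Y Z : Q, ¬ Mono X → (QuotientGraph G P).Adj X Y →
      (QuotientGraph G P).Adj X Z → Y = Z := by
    intro X Y Z hX hY hZ
    set S : Set (Finset V) := {W | W ∈ P.parts ∧ W ≠ X.1 ∧ ¬ Homogeneous G X.1 W} with hS
    have hScard : S.ncard ≤ 1 := hred X.1 X.2
    have hSfin : S.Finite := Set.Finite.subset P.parts.finite_toSet (fun W hW => hW.1)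
    have hmem : ∀ W : Q, (QuotientGraph G P).Adj X W → W.1 ∈ S := by
      intro W hW
      refine ⟨W.2, ?_, ?_⟩
      · exact fun h => ((hadj_iff X W).1 hW).1 ((Subtype.ext h).symm)
      · exact hredadj X W hX hW
    by_contra hYZ
    have hYZ1 : Y.1 ≠ Z.1 := fun h => hYZ (Subtype.ext h)
    have hsub : ({Y.1, Z.1} : Set (Finset V)) ⊆ S := by
      rintro W (rfl | rfl)
      exacts [hmem Y hY, hmem Z hZ]
    have : 2 ≤ S.ncard := by
      rw [← Set.ncard_pair hYZ1]
      exact Set.ncard_le_ncard hsub hSfin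
    omega
  -- the coloring
  let f : Q → Fin 2 := fun X =>
    if Mono X then c (rep X)
    else if h2 : ∃ Y : Q, (QuotientGraph G P).Adj X Y then
      (if Mono h2.choose then c (rep h2.choose) + 1
       else if e X < e h2.choose then 0 else 1)
    else 0
  have hvalid : ∀ X Y : Q, (QuotientGraph G P).Adj X Y → f X ≠ f Y := by
    intro X Y hadj
    obtain ⟨hne, x, hx, y, hy, hxy⟩ := (hadj_iff X Y).1 hadj
    by_cases hMX : Mono X <;> by_cases hMY : Mono Y
    · -- both monochromatic
      simp only [f, if_pos hMX, if_pos hMY]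
      have h1 : c (rep X) = c x := hMX _ (hrep X) _ hx
      have h2 : c (rep Y) = c y := hMY _ (hrep Y) _ hy
      rw [h1, h2]
      exact c.valid hxy
    · -- X mono, Y not
      have hEY : ∃ Z : Q, (QuotientGraph G P).Adj Y Z := ⟨X, hadj.symm⟩
      have hch : hEY.choose = X := huniq Y hEY.choose X hMY hEY.choose_spec hadj.symm
      simp only [f, if_pos hMX, if_neg hMY, dif_pos hEY, hch, if_pos hMX]
      exact fun h => fin2' (c (rep X)) h
    · -- Y mono, X not
      have hEX : ∃ Z : Q, (QuotientGraph G P).Adj X Z := ⟨Y, hadj⟩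
      have hch : hEX.choose = Y := huniq X hEX.choose Y hMX hEX.choose_spec hadj
      simp only [f, if_neg hMX, if_pos hMY, dif_pos hEX, hch]
      exact fun h => fin2' (c (rep Y)) h.symm
    · -- neither mono
      have hEX : ∃ Z : Q, (QuotientGraph G P).Adj X Z := ⟨Y, hadj⟩
      have hEY : ∃ Z : Q, (QuotientGraph G P).Adj Y Z := ⟨X, hadj.symm⟩
      have hchX : hEX.choose = Y := huniq X hEX.choose Y hMX hEX.choose_spec hadj
      have hchY : hEY.choose = X := huniq Y hEY.choose X hMY hEY.choose_spec hadj.symm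
      simp only [f, if_neg hMX, if_neg hMY, dif_pos hEX, dif_pos hEY, hchX, hchY,
        if_neg hMX, if_neg hMY]
      rcases lt_trichotomy (e X) (e Y) with hlt | heq | hgt
      · rw [if_pos hlt, if_neg (not_lt_of_gt hlt)]; decide
      · exact absurd (e.injective heq) hne
      · rw [if_neg (not_lt_of_gt hgt), if_pos hgt]; decide
  exact ⟨SimpleGraph.Coloring.mk f (fun {X Y} h => hvalid X Y h)⟩
end
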